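/- arXiv:2003.12239 — 7 statements merged into one kernel-verified Lean document; each statement's English description precedes it below -/
import Mathlib

section
/- Suppose T̂^π is an empirical Bellman operator for a policy π (i.e. E_{ω∼η}[T̂^π(f,ω)] = T^π f for all f ∈ ℝ^d), and suppose the constant step-size updates f_{n+1} = (1−α)f_n + α T̂^π(f_n, ω_n), with ω_n sampled i.i.d. from η independently of f_n, converge to a stationary distribution ψ_α with finite first moment. Then the mean of the stationary distribution equals the fixed point of T^π: if f_α ∼ ψ_α, then E[f_α] = f^π. -/
/-!
STATEMENT 2: If T̂^π is an empirical Bellman operator for policy π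
(E_ω[T̂^π(f,ω)] = T^π f = R^π + γ P^π f for all f) and the constant step-size
updates f ↦ (1−α) f + α T̂^π(f,ω), ω ∼ η independent of f, have stationary
distribution ψ_α with finite first moment, then E[f_α] = f^π, the fixed point
of T^π.
-/

open MeasureTheory

lemma bind_map_eq_map_prod {A B C : Type*} [MeasurableSpace A] [MeasurableSpace B]
    [MeasurableSpace C] (μ : Measure A) (ν : Measure B) [SFinite ν]
    (G : A × B → C) (hG : Measurable G) :
    μ.bind (fun a => ν.map (fun b => G (a, b))) = (μ.prod ν).map G := by
  have hker : Measurable (fun a => ν.map (fun b => G (a, b))) := by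
    apply Measure.measurable_of_measurable_coe
    intro s hs
    have : (fun a => ν.map (fun b => G (a, b)) s)
        = fun a => ν (Prod.mk a ⁻¹' (G ⁻¹' s)) := by
      funext a
      exact Measure.map_apply (hG.comp measurable_prodMk_left) hs
    rw [this]
    exact measurable_measure_prodMk_left (hG hs)
  ext s hs
  rw [Measure.bind_apply hs hker.aemeasurable, Measure.map_apply hG hs,
    Measure.prod_apply (hG hs)]
  refine lintegral_congr fun a => ?_
  exact Measure.map_apply (hG.comp measurable_prodMk_left) hs

lemma measure_bind_congr_ae {A B : Type*} [MeasurableSpace A] [MeasurableSpace B]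
    (μ : Measure A) {f g : A → Measure B} (h : f =ᵐ[μ] g) : μ.bind f = μ.bind g := by
  unfold Measure.bind
  rw [Measure.map_congr h]

theorem stationary_distribution_mean_is_value_function
    {d : ℕ} {Ω : Type*} [MeasurableSpace Ω]
    (η : Measure Ω) (hη : IsProbabilityMeasure η)
    -- the (affine) Bellman operator T^π f = R^π + γ P^π f
    (Rπ : Fin d → ℝ) (Pπ : Matrix (Fin d) (Fin d) ℝ)
    (hPnn : ∀ i j, 0 ≤ Pπ i j) (hProw : ∀ i, ∑ j, Pπ i j = 1)
    (γ : ℝ) (hγ0 : 0 ≤ γ) (hγ1 : γ < 1)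
    -- the stochastic operator, an empirical Bellman operator for π
    (That : (Fin d → ℝ) → Ω → (Fin d → ℝ))
    (hEmp : ∀ f, ∫ ω, That f ω ∂η = Rπ + γ • Pπ.mulVec f)
    (α : ℝ) (hα0 : 0 < α) (hα1 : α ≤ 1)
    -- the stationary distribution of the update f ↦ (1−α) f + α T̂(f,ω)
    (ψ : Measure (Fin d → ℝ)) (hψ : IsProbabilityMeasure ψ)
    (hstat : ψ.bind (fun f => η.map fun ω => (1 - α) • f + α • That f ω) = ψ)
    -- finite first moment, and integrability of the stochastic target
    (hmom : Integrable (id : (Fin d → ℝ) → (Fin d → ℝ)) ψ)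
    (hTint : Integrable (fun p : (Fin d → ℝ) × Ω => That p.1 p.2) (ψ.prod η))
    -- the fixed point of T^π
    (fπ : Fin d → ℝ) (hfix : Rπ + γ • Pπ.mulVec fπ = fπ) :
    ∫ f, f ∂ψ = fπ := by
  set m : Fin d → ℝ := ∫ f, f ∂ψ with hm
  -- measurable modification of That
  set g : (Fin d → ℝ) × Ω → (Fin d → ℝ) := hTint.1.mk _ with hgdef
  have hgmeas : Measurable g := hTint.1.stronglyMeasurable_mk.measurable
  have hae : (fun p : (Fin d → ℝ) × Ω => That p.1 p.2) =ᵐ[ψ.prod η] g := hTint.1.ae_eq_mk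
  set F : (Fin d → ℝ) × Ω → (Fin d → ℝ) := fun p => (1 - α) • p.1 + α • g p with hF
  have hFmeas : Measurable F :=
    (measurable_fst.const_smul (1 - α)).add (hgmeas.const_smul α)
  -- rewrite the bind as a pushforward of the product measure
  have hbind : ψ.bind (fun f => η.map fun ω => (1 - α) • f + α • That f ω)
      = (ψ.prod η).map F := by
    have h1 : (fun f => η.map fun ω => (1 - α) • f + α • That f ω)
        =ᵐ[ψ] (fun f => η.map fun ω => F (f, ω)) := by
      filter_upwards [Measure.ae_ae_of_ae_prod hae] with f hf
      refine Measure.map_congr (hf.mono fun ω hω => ?_)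
      simp only [hF, hω]
    rw [measure_bind_congr_ae ψ h1]
    exact bind_map_eq_map_prod ψ η F hFmeas
  -- integrability facts
  have hmapfst : (ψ.prod η).map Prod.fst = ψ := Measure.fst_prod
  have hfst : Integrable (fun p : (Fin d → ℝ) × Ω => p.1) (ψ.prod η) := by
    have h := (integrable_map_measure (f := Prod.fst)
        (g := (id : (Fin d → ℝ) → (Fin d → ℝ)))
        (by rw [hmapfst]; exact hmom.1) measurable_fst.aemeasurable).mp
        (by rw [hmapfst]; exact hmom)
    exact h
  have hgint : Integrable g (ψ.prod η) := hTint.congr hae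
  -- the continuous linear map given by Pπ
  set L : (Fin d → ℝ) →L[ℝ] (Fin d → ℝ) := LinearMap.toContinuousLinearMap (Matrix.mulVecLin Pπ)
    with hL
  have hLapp : ∀ v : Fin d → ℝ, L v = Pπ.mulVec v := fun v => rfl
  have hLint : Integrable (fun f : Fin d → ℝ => Pπ.mulVec f) ψ := by
    have := L.integrable_comp hmom
    simpa [hLapp] using this
  have hLcomm : ∫ f, Pπ.mulVec f ∂ψ = Pπ.mulVec m := by
    have := L.integral_comp_comm hmom
    simpa [hLapp] using this
  -- the integral of the empirical target
  have hTprod : ∫ p, That p.1 p.2 ∂(ψ.prod η) = Rπ + γ • Pπ.mulVec m := by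
    rw [MeasureTheory.integral_prod _ hTint]
    simp_rw [hEmp]
    have hadd : Integrable (fun f : Fin d → ℝ => γ • Pπ.mulVec f) ψ := by
      exact hLint.smul γ
    rw [integral_add (integrable_const Rπ) hadd, integral_smul, hLcomm, integral_const]
    simp
  -- the stationarity identity in expectation
  have key : m = (1 - α) • m + α • (Rπ + γ • Pπ.mulVec m) := by
    have h2 : ∫ p, p.1 ∂(ψ.prod η) = m := by
      have := integral_map (φ := (Prod.fst : (Fin d → ℝ) × Ω → (Fin d → ℝ)))
        (f := (id : (Fin d → ℝ) → (Fin d → ℝ))) measurable_fst.aemeasurable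
        (by rw [hmapfst]; exact hmom.1)
      rw [hmapfst] at this
      exact this.symm
    have h3 : ∫ p, g p ∂(ψ.prod η) = Rπ + γ • Pπ.mulVec m := by
      rw [← integral_congr_ae hae, hTprod]
    calc m = ∫ f, f ∂(ψ.bind (fun f => η.map fun ω => (1 - α) • f + α • That f ω)) := by
            rw [hstat]
      _ = ∫ p, F p ∂(ψ.prod η) := by
            rw [hbind]
            exact integral_map hFmeas.aemeasurable aestronglyMeasurable_id
      _ = (1 - α) • (∫ p, p.1 ∂(ψ.prod η)) + α • (∫ p, g p ∂(ψ.prod η)) := by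
            have hi1 : Integrable (fun p : (Fin d → ℝ) × Ω => (1 - α) • p.1) (ψ.prod η) := by
              exact hfst.smul (1 - α)
            have hi2 : Integrable (fun p : (Fin d → ℝ) × Ω => α • g p) (ψ.prod η) := by
              exact hgint.smul α
            simp only [hF]
            rw [integral_add hi1 hi2, integral_smul, integral_smul]
      _ = (1 - α) • m + α • (Rπ + γ • Pπ.mulVec m) := by rw [h2, h3]
  -- coordinatewise Bellman equation for m
  have hmul : ∀ (v : Fin d → ℝ) (i : Fin d), Pπ.mulVec v i = ∑ j, Pπ i j * v j := by
    intro v i; simp [Matrix.mulVec, dotProduct]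
  have hmeq : ∀ i, m i = Rπ i + γ * ∑ j, Pπ i j * m j := by
    intro i
    have hk := congrFun key i
    simp only [Pi.add_apply, Pi.smul_apply, smul_eq_mul] at hk
    have h5 : α * (m i - (Rπ i + γ * Pπ.mulVec m i)) = 0 := by linear_combination hk
    have h6 : m i - (Rπ i + γ * Pπ.mulVec m i) = 0 :=
      (mul_eq_zero.mp h5).resolve_left hα0.ne'
    have h7 : m i = Rπ i + γ * Pπ.mulVec m i := by linarith
    rw [h7, hmul]
  have hfeq : ∀ i, fπ i = Rπ i + γ * ∑ j, Pπ i j * fπ j := by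
    intro i
    have := congrFun hfix i
    simp only [Pi.add_apply, Pi.smul_apply, smul_eq_mul] at this
    rw [← this, hmul]
  -- the difference h = m - fπ satisfies h = γ Pπ h, hence h = 0
  set h : Fin d → ℝ := fun i => m i - fπ i with hh
  have hrec : ∀ i, h i = γ * ∑ j, Pπ i j * h j := by
    intro i
    have hs : ∑ j, Pπ i j * h j = (∑ j, Pπ i j * m j) - ∑ j, Pπ i j * fπ j := by
      rw [← Finset.sum_sub_distrib]
      exact Finset.sum_congr rfl fun j _ => by simp only [hh]; ring
    simp only [hh]
    rw [hmeq i, hfeq i, hs]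
    ring
  have hzero : ∀ i, h i = 0 := by
    intro i
    rcases Nat.eq_zero_or_pos d with hd | hd
    · exact absurd i.isLt (by omega)
    obtain ⟨i₀, -, hmax⟩ := Finset.exists_max_image (Finset.univ : Finset (Fin d))
      (fun i => |h i|) ⟨⟨0, hd⟩, Finset.mem_univ _⟩
    have hb : ∀ j, |h j| ≤ |h i₀| := fun j => hmax j (Finset.mem_univ j)
    have hkey : |h i₀| ≤ γ * |h i₀| := by
      calc |h i₀| = γ * |∑ j, Pπ i₀ j * h j| := by
            rw [hrec i₀, abs_mul, abs_of_nonneg hγ0]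
        _ ≤ γ * ∑ j, |Pπ i₀ j * h j| :=
            mul_le_mul_of_nonneg_left (Finset.abs_sum_le_sum_abs _ _) hγ0
        _ = γ * ∑ j, Pπ i₀ j * |h j| := by
            congr 1
            exact Finset.sum_congr rfl fun j _ => by
              rw [abs_mul, abs_of_nonneg (hPnn _ _)]
        _ ≤ γ * ∑ j, Pπ i₀ j * |h i₀| := by
            refine mul_le_mul_of_nonneg_left ?_ hγ0
            exact Finset.sum_le_sum fun j _ =>
              mul_le_mul_of_nonneg_left (hb j) (hPnn _ _)
        _ = γ * |h i₀| := by rw [← Finset.sum_mul, hProw, one_mul]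
    have h0 : |h i₀| = 0 := by nlinarith [abs_nonneg (h i₀)]
    have : |h i| ≤ 0 := by rw [← h0]; exact hb i
    exact abs_eq_zero.mp (le_antisymm this (abs_nonneg _))
  funext i
  have := hzero i
  simp only [hh] at this
  have : m i = fπ i := by linarith
  exact this
end

section
/- Let T̂^π be an empirical Bellman operator for policy π whose constant step-size updates f_{n+1} = (1−α)f_n + αT̂^π(f_n,ω_n) converge to a stationary distribution ψ_α with finite second moment. Define the noise ξ_ω(f) = T̂^π(f,ω) − T^π f and its covariance C(f) = E_ω[ξ_ω(f)ξ_ω(f)^T]. Then the covariance Σ = E[(f_α − f^π)(f_α − f^π)^T] of f_α ∼ ψ_α satisfies (1−(1−α)²)Σ = α²(γP^π)Σ(γP^π)^T + α(1−α)(γP^π)Σ + α(1−α)Σ(γP^π)^T + α² ∫ C(f) ψ_α(df). -/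
/-!
STATEMENT 3: Recursive equation for the covariance
Cov = E[(f_α − f^π)(f_α − f^π)ᵀ] of the stationary distribution ψ_α of the
constant step-size updates driven by an empirical Bellman operator:
(1−(1−α)²)Σ = α²(γP^π)Σ(γP^π)ᵀ + α(1−α)(γP^π)Σ + α(1−α)Σ(γP^π)ᵀ + α²∫C(f)ψ_α(df),
where C(f) = E_ω[ξ_ω(f)ξ_ω(f)ᵀ] and ξ_ω(f) = T̂^π(f,ω) − T^π f.
-/

open MeasureTheory Matrix

/-- Product of two `ℒ²` real functions is integrable. -/
lemma l2_mul_integrable {A : Type*} [MeasurableSpace A] {μ : Measure A}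
    {f g : A → ℝ} (hf : MemLp f 2 μ) (hg : MemLp g 2 μ) :
    Integrable (fun x => f x * g x) μ := by
  have hdom : Integrable (fun x => (1 / 2 : ℝ) * (f x ^ 2 + g x ^ 2)) μ :=
    (hf.integrable_sq.add hg.integrable_sq).const_mul _
  refine hdom.mono' (hf.1.mul hg.1) ?_
  filter_upwards with x
  rw [Real.norm_eq_abs, abs_mul]
  nlinarith [sq_abs (f x), sq_abs (g x), abs_nonneg (f x), abs_nonneg (g x),
    sq_nonneg (|f x| - |g x|)]


/-- Splitting an integral of a linear combination of four integrable functions. -/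
lemma integral_four_split {A : Type*} [MeasurableSpace A] {μ : Measure A}
    {a b c e : A → ℝ} (ha : Integrable a μ) (hb : Integrable b μ)
    (hc : Integrable c μ) (he : Integrable e μ) (c1 c2 c3 c4 : ℝ) :
    ∫ x, (c1 * a x + c2 * b x + c3 * c x + c4 * e x) ∂μ
      = c1 * ∫ x, a x ∂μ + c2 * ∫ x, b x ∂μ + c3 * ∫ x, c x ∂μ + c4 * ∫ x, e x ∂μ := by
  have h1 : Integrable (fun x => c1 * a x) μ := ha.const_mul _
  have h2 : Integrable (fun x => c2 * b x) μ := hb.const_mul _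
  have h3 : Integrable (fun x => c3 * c x) μ := hc.const_mul _
  have h4 : Integrable (fun x => c4 * e x) μ := he.const_mul _
  have h12 : Integrable (fun x => c1 * a x + c2 * b x) μ := h1.add h2
  have h123 : Integrable (fun x => c1 * a x + c2 * b x + c3 * c x) μ := h12.add h3
  rw [integral_add h123 h4, integral_add h12 h3, integral_add h1 h2,
    integral_const_mul, integral_const_mul, integral_const_mul, integral_const_mul]

theorem stationary_distribution_covariance
    {d : ℕ} {Ω : Type*} [MeasurableSpace Ω]
    (η : Measure Ω) (hη : IsProbabilityMeasure η)
    -- the (affine) Bellman operator T^π f = R^π + γ P^π f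
    (Rπ : Fin d → ℝ) (Pπ : Matrix (Fin d) (Fin d) ℝ)
    (hPnn : ∀ i j, 0 ≤ Pπ i j) (hProw : ∀ i, ∑ j, Pπ i j = 1)
    (γ : ℝ) (hγ0 : 0 ≤ γ) (hγ1 : γ < 1)
    -- the stochastic operator, an empirical Bellman operator for π
    (That : (Fin d → ℝ) → Ω → (Fin d → ℝ))
    (hEmp : ∀ f, ∫ ω, That f ω ∂η = Rπ + γ • Pπ.mulVec f)
    (α : ℝ) (hα0 : 0 < α) (hα1 : α ≤ 1)
    -- the stationary distribution of the update f ↦ (1−α) f + α T̂(f,ω)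
    (ψ : Measure (Fin d → ℝ)) (hψ : IsProbabilityMeasure ψ)
    (hstat : ψ.bind (fun f => η.map fun ω => (1 - α) • f + α • That f ω) = ψ)
    -- finite second moments
    (hmom : MemLp (id : (Fin d → ℝ) → (Fin d → ℝ)) 2 ψ)
    (hTmom : MemLp (fun p : (Fin d → ℝ) × Ω => That p.1 p.2) 2 (ψ.prod η))
    -- the fixed point of T^π
    (fπ : Fin d → ℝ) (hfix : Rπ + γ • Pπ.mulVec fπ = fπ)
    -- the stationary covariance matrix Cov = E[(f_α − f^π)(f_α − f^π)ᵀ]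
    (Cov : Matrix (Fin d) (Fin d) ℝ)
    (hCov : ∀ i j, Cov i j = ∫ f, (f i - fπ i) * (f j - fπ j) ∂ψ)
    -- the mean noise covariance ∫ C(f) ψ_α(df), C(f) = E_ω[ξ_ω(f) ξ_ω(f)ᵀ]
    (Cbar : Matrix (Fin d) (Fin d) ℝ)
    (hCbar : ∀ i j, Cbar i j =
      ∫ f, (∫ ω, (That f ω i - (Rπ + γ • Pπ.mulVec f) i)
                * (That f ω j - (Rπ + γ • Pπ.mulVec f) j) ∂η) ∂ψ) :
    (1 - (1 - α) ^ 2) • Cov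
      = α ^ 2 • ((γ • Pπ) * Cov * (γ • Pπ)ᵀ)
        + (α * (1 - α)) • ((γ • Pπ) * Cov)
        + (α * (1 - α)) • (Cov * (γ • Pπ)ᵀ)
        + α ^ 2 • Cbar := by
  classical
  haveI := hψ
  haveI := hη
  set M : Measure ((Fin d → ℝ) × Ω) := ψ.prod η with hM
  -- the affine identity: T^π f − f^π = γ P^π (f − f^π), coordinatewise
  have hT : ∀ (f : Fin d → ℝ) (k : Fin d),
      (Rπ + γ • Pπ.mulVec f) k - fπ k = γ * ∑ l, Pπ k l * (f l - fπ l) := by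
    intro f k
    have h1 : fπ k = Rπ k + γ * ∑ l, Pπ k l * fπ l := by
      conv_lhs => rw [← hfix]
      simp [Matrix.mulVec, dotProduct]
    have h2 : ∑ l, Pπ k l * (f l - fπ l)
        = (∑ l, Pπ k l * f l) - ∑ l, Pπ k l * fπ l := by
      rw [← Finset.sum_sub_distrib]
      exact Finset.sum_congr rfl fun l _ => by ring
    simp only [Pi.add_apply, Pi.smul_apply, smul_eq_mul, Matrix.mulVec, dotProduct]
    rw [h2, h1]; ring
  -- measurable version of the update map
  have hTsm : AEStronglyMeasurable (fun p : (Fin d → ℝ) × Ω => That p.1 p.2) M := hTmom.1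
  set T' : (Fin d → ℝ) × Ω → (Fin d → ℝ) := hTsm.mk _ with hT'
  have hT'sm : StronglyMeasurable T' := hTsm.stronglyMeasurable_mk
  have haeT : (fun p : (Fin d → ℝ) × Ω => That p.1 p.2) =ᵐ[M] T' := hTsm.ae_eq_mk
  set G : (Fin d → ℝ) × Ω → (Fin d → ℝ) := fun p => (1 - α) • p.1 + α • T' p with hGdef
  have hG : Measurable G := by
    have h1 : Measurable fun p : (Fin d → ℝ) × Ω => (1 - α) • p.1 :=
      measurable_fst.const_smul (1 - α)
    have h2 : Measurable fun p : (Fin d → ℝ) × Ω => α • T' p :=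
      hT'sm.measurable.const_smul α
    exact h1.add h2
  have hFG : ∀ᵐ p ∂M, (1 - α) • p.1 + α • That p.1 p.2 = G p := by
    filter_upwards [haeT] with p hp
    rw [hGdef, hp]
  -- the stationary measure as a pushforward of the product measure
  have hψeq : ψ = M.map G := by
    have hker : (fun f => η.map fun ω => (1 - α) • f + α • That f ω)
        =ᵐ[ψ] fun f => (η.map (Prod.mk f)).map G := by
      filter_upwards [Measure.ae_ae_of_ae_prod hFG] with f hf
      calc η.map (fun ω => (1 - α) • f + α • That f ω)
          = η.map (fun ω => G (f, ω)) := Measure.map_congr hf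
        _ = (η.map (Prod.mk f)).map G := by
            rw [Measure.map_map hG measurable_prodMk_left]; rfl
    calc ψ = ψ.bind (fun f => η.map fun ω => (1 - α) • f + α • That f ω) := hstat.symm
      _ = ψ.bind (fun f => (η.map (Prod.mk f)).map G) := by
          simp only [Measure.bind]
          rw [Measure.map_congr hker]
      _ = M.map G := by
          have hmb : (ψ.bind fun f => Measure.map (Prod.mk f) η).map G
              = ψ.bind fun f => (Measure.map (Prod.mk f) η).map G := by
            have hdG : Measurable fun x : (Fin d → ℝ) × Ω => Measure.dirac (G x) :=
              Measure.measurable_dirac.comp hG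
            rw [← Measure.bind_dirac_eq_map _ hG,
              Measure.bind_bind Measurable.map_prodMk_left.aemeasurable hdG.aemeasurable]
            exact congrArg _ (funext fun f => Measure.bind_dirac_eq_map _ hG)
          rw [hM, Measure.prod_def, hmb]
  -- transfer of integrals from ψ to the product measure
  have htrans : ∀ φ : (Fin d → ℝ) → ℝ, Continuous φ →
      ∫ f, φ f ∂ψ = ∫ p, φ ((1 - α) • p.1 + α • That p.1 p.2) ∂M := by
    intro φ hφ
    rw [hψeq, integral_map hG.aemeasurable hφ.aestronglyMeasurable]
    refine integral_congr_ae ?_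
    filter_upwards [hFG] with p hp
    rw [← hp]
  -- ℒ² facts
  have hfst : MeasurePreserving (Prod.fst : (Fin d → ℝ) × Ω → (Fin d → ℝ)) M ψ := by
    refine ⟨measurable_fst, ?_⟩
    rw [hM, Measure.map_fst_prod]
    simp
  have hXfull : MemLp (fun p : (Fin d → ℝ) × Ω => p.1) 2 M :=
    hmom.comp_measurePreserving hfst
  have hX2 : ∀ k, MemLp (fun p : (Fin d → ℝ) × Ω => p.1 k - fπ k) 2 M := by
    intro k
    have := ((ContinuousLinearMap.proj (R := ℝ) (φ := fun _ : Fin d => ℝ) k).comp_memLp'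
      hXfull).sub (memLp_const (fπ k))
    simpa [Function.comp, Pi.sub_def] using this
  have hY2 : ∀ k, MemLp (fun p : (Fin d → ℝ) × Ω => That p.1 p.2 k - fπ k) 2 M := by
    intro k
    have := ((ContinuousLinearMap.proj (R := ℝ) (φ := fun _ : Fin d => ℝ) k).comp_memLp'
      hTmom).sub (memLp_const (fπ k))
    simpa [Function.comp, Pi.sub_def] using this
  have hu2 : ∀ k, MemLp (fun f : Fin d → ℝ => f k - fπ k) 2 ψ := by
    intro k
    have := ((ContinuousLinearMap.proj (R := ℝ) (φ := fun _ : Fin d => ℝ) k).comp_memLp'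
      hmom).sub (memLp_const (fπ k))
    simpa [Function.comp, Pi.sub_def] using this
  have hW2 : ∀ k, MemLp (fun p : (Fin d → ℝ) × Ω => (Rπ + γ • Pπ.mulVec p.1) k - fπ k) 2 M := by
    intro k
    have heq : (fun p : (Fin d → ℝ) × Ω => (Rπ + γ • Pπ.mulVec p.1) k - fπ k)
        = fun p => ∑ l, (γ * Pπ k l) * (p.1 l - fπ l) := by
      funext p
      rw [hT p.1 k, Finset.mul_sum]
      exact Finset.sum_congr rfl fun l _ => by ring
    rw [heq]
    exact memLp_finset_sum _ fun l _ => (hX2 l).const_mul _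
  have hw2ψ : ∀ k, MemLp (fun f : Fin d → ℝ => γ * ∑ l, Pπ k l * (f l - fπ l)) 2 ψ := by
    intro k
    have heq : (fun f : Fin d → ℝ => γ * ∑ l, Pπ k l * (f l - fπ l))
        = fun f => ∑ l, (γ * Pπ k l) * (f l - fπ l) := by
      funext f
      rw [Finset.mul_sum]
      exact Finset.sum_congr rfl fun l _ => by ring
    rw [heq]
    exact memLp_finset_sum _ fun l _ => (hu2 l).const_mul _
  have hZ2 : ∀ k, MemLp
      (fun p : (Fin d → ℝ) × Ω => That p.1 p.2 k - (Rπ + γ • Pπ.mulVec p.1) k) 2 M := by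
    intro k
    have heq : (fun p : (Fin d → ℝ) × Ω => That p.1 p.2 k - (Rπ + γ • Pπ.mulVec p.1) k)
        = fun p => (That p.1 p.2 k - fπ k) - ((Rπ + γ • Pπ.mulVec p.1) k - fπ k) := by
      funext p; ring
    rw [heq]
    have := (hY2 k).sub (hW2 k)
    simpa [Pi.sub_def] using this
  -- integrability of the vector-valued operator and its sections
  have hTint : Integrable (fun p : (Fin d → ℝ) × Ω => That p.1 p.2) M :=
    hTmom.integrable one_le_two
  have hTsec : ∀ᵐ f ∂ψ, Integrable (fun ω => That f ω) η := by
    have := hTint.prod_right_ae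
    simpa using this
  have hTmean : ∀ᵐ f ∂ψ, ∀ k, ∫ ω, That f ω k ∂η = (Rπ + γ • Pπ.mulVec f) k := by
    filter_upwards [hTsec] with f hf k
    have h := (ContinuousLinearMap.proj (R := ℝ) (φ := fun _ : Fin d => ℝ) k).integral_comp_comm hf
    simp only [ContinuousLinearMap.proj_apply] at h
    rw [h, hEmp f]
  -- E1: pure-state term
  have hE1 : ∀ i j, ∫ p : (Fin d → ℝ) × Ω, (p.1 i - fπ i) * (p.1 j - fπ j) ∂M = Cov i j := by
    intro i j
    have hc : Continuous (fun f : Fin d → ℝ => (f i - fπ i) * (f j - fπ j)) :=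
      ((continuous_apply i).sub continuous_const).mul ((continuous_apply j).sub continuous_const)
    have hsm : AEStronglyMeasurable (fun f : Fin d → ℝ => (f i - fπ i) * (f j - fπ j))
        (M.map Prod.fst) := hc.aestronglyMeasurable
    rw [hCov i j, show ψ = M.map Prod.fst from hfst.map_eq.symm,
      integral_map measurable_fst.aemeasurable hsm]
  -- E2: cross term (state × operator)
  have hE2 : ∀ i j, ∫ p : (Fin d → ℝ) × Ω, (p.1 i - fπ i) * (That p.1 p.2 j - fπ j) ∂M
      = γ * ∑ k, Pπ j k * Cov i k := by
    intro i j
    have hint : Integrable (fun p : (Fin d → ℝ) × Ω =>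
        (p.1 i - fπ i) * (That p.1 p.2 j - fπ j)) M := l2_mul_integrable (hX2 i) (hY2 j)
    rw [hM] at hint ⊢
    rw [integral_prod _ hint]
    have hinner : (fun f => ∫ ω, (f i - fπ i) * (That f ω j - fπ j) ∂η)
        =ᵐ[ψ] fun f => ∑ k, (γ * Pπ j k) * ((f i - fπ i) * (f k - fπ k)) := by
      filter_upwards [hTsec, hTmean] with f hf hm
      have hcoord : Integrable (fun ω => That f ω j) η := by
        have := (ContinuousLinearMap.proj (R := ℝ) (φ := fun _ : Fin d => ℝ) j).integrable_comp hf
        simpa using this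
      rw [integral_const_mul]
      have hsub : ∫ ω, (That f ω j - fπ j) ∂η = (Rπ + γ • Pπ.mulVec f) j - fπ j := by
        rw [integral_sub hcoord (integrable_const _), integral_const, hm j]
        simp
      rw [hsub, hT f j]
      simp only [Finset.mul_sum]
      exact Finset.sum_congr rfl fun k _ => by ring
    rw [integral_congr_ae hinner,
      integral_finset_sum _ fun k _ => (l2_mul_integrable (hu2 i) (hu2 k)).const_mul _,
      Finset.mul_sum]
    exact Finset.sum_congr rfl fun k _ => by
      rw [integral_const_mul, ← hCov i k]; ring
  -- symmetry of Cov
  have hCovsymm : ∀ k l, Cov k l = Cov l k := by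
    intro k l
    rw [hCov k l, hCov l k]
    exact integral_congr_ae (Filter.Eventually.of_forall fun f => mul_comm _ _)
  -- E3: cross term (operator × state)
  have hE3 : ∀ i j, ∫ p : (Fin d → ℝ) × Ω, (That p.1 p.2 i - fπ i) * (p.1 j - fπ j) ∂M
      = γ * ∑ k, Pπ i k * Cov k j := by
    intro i j
    have hsw : ∫ p : (Fin d → ℝ) × Ω, (That p.1 p.2 i - fπ i) * (p.1 j - fπ j) ∂M
        = ∫ p : (Fin d → ℝ) × Ω, (p.1 j - fπ j) * (That p.1 p.2 i - fπ i) ∂M :=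
      integral_congr_ae (Filter.Eventually.of_forall fun p => mul_comm _ _)
    rw [hsw, hE2 j i]
    congr 1
    exact Finset.sum_congr rfl fun k _ => by rw [hCovsymm j k]
  -- E4: operator × operator term
  have hE4 : ∀ i j, ∫ p : (Fin d → ℝ) × Ω, (That p.1 p.2 i - fπ i) * (That p.1 p.2 j - fπ j) ∂M
      = Cbar i j + ∑ k, ∑ l, (γ * Pπ i k) * (γ * Pπ j l) * Cov k l := by
    intro i j
    have hint : Integrable (fun p : (Fin d → ℝ) × Ω =>
        (That p.1 p.2 i - fπ i) * (That p.1 p.2 j - fπ j)) M :=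
      l2_mul_integrable (hY2 i) (hY2 j)
    have hZZint : Integrable (fun p : (Fin d → ℝ) × Ω =>
        (That p.1 p.2 i - (Rπ + γ • Pπ.mulVec p.1) i)
          * (That p.1 p.2 j - (Rπ + γ • Pπ.mulVec p.1) j)) M :=
      l2_mul_integrable (hZ2 i) (hZ2 j)
    have hZiint : Integrable (fun p : (Fin d → ℝ) × Ω =>
        That p.1 p.2 i - (Rπ + γ • Pπ.mulVec p.1) i) M := (hZ2 i).integrable one_le_two
    have hZjint : Integrable (fun p : (Fin d → ℝ) × Ω =>
        That p.1 p.2 j - (Rπ + γ • Pπ.mulVec p.1) j) M := (hZ2 j).integrable one_le_two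
    rw [hM] at hint hZZint hZiint hZjint ⊢
    rw [integral_prod _ hint]
    have hZZsec := hZZint.prod_right_ae
    have hZisec := hZiint.prod_right_ae
    have hZjsec := hZjint.prod_right_ae
    have hinner : (fun f => ∫ ω, (That f ω i - fπ i) * (That f ω j - fπ j) ∂η)
        =ᵐ[ψ] fun f =>
          (∫ ω, (That f ω i - (Rπ + γ • Pπ.mulVec f) i)
            * (That f ω j - (Rπ + γ • Pπ.mulVec f) j) ∂η)
          + (γ * ∑ k, Pπ i k * (f k - fπ k)) * (γ * ∑ l, Pπ j l * (f l - fπ l)) := by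
      filter_upwards [hTsec, hTmean, hZZsec, hZisec, hZjsec] with f hf hm hzz hzi hzj
      have hzero : ∀ k : Fin d, ∫ ω, (That f ω k - (Rπ + γ • Pπ.mulVec f) k) ∂η = 0 := by
        intro k
        have hcoord : Integrable (fun ω => That f ω k) η := by
          have := (ContinuousLinearMap.proj (R := ℝ)
            (φ := fun _ : Fin d => ℝ) k).integrable_comp hf
          simpa using this
        rw [integral_sub hcoord (integrable_const _), integral_const, hm k]
        simp
      have hzz' : Integrable (fun ω =>
          (That f ω i - (Rπ + γ • Pπ.mulVec f) i)
            * (That f ω j - (Rπ + γ • Pπ.mulVec f) j)) η := hzz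
      have hzi' : Integrable (fun ω => That f ω i - (Rπ + γ • Pπ.mulVec f) i) η := hzi
      have hzj' : Integrable (fun ω => That f ω j - (Rπ + γ • Pπ.mulVec f) j) η := hzj
      have hexp : ∀ ω, (That f ω i - fπ i) * (That f ω j - fπ j)
          = 1 * ((That f ω i - (Rπ + γ • Pπ.mulVec f) i)
                * (That f ω j - (Rπ + γ • Pπ.mulVec f) j))
            + ((Rπ + γ • Pπ.mulVec f) j - fπ j)
                * (That f ω i - (Rπ + γ • Pπ.mulVec f) i)
            + ((Rπ + γ • Pπ.mulVec f) i - fπ i)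
                * (That f ω j - (Rπ + γ • Pπ.mulVec f) j)
            + (((Rπ + γ • Pπ.mulVec f) i - fπ i)
                * ((Rπ + γ • Pπ.mulVec f) j - fπ j)) * 1 :=
        fun ω => by ring
      rw [integral_congr_ae (Filter.Eventually.of_forall hexp),
        integral_four_split hzz' hzi' hzj' (integrable_const 1),
        hzero i, hzero j, integral_const, hT f i, hT f j]
      simp
    rw [integral_congr_ae hinner, integral_add hZZint.integral_prod_left
      (l2_mul_integrable (hw2ψ i) (hw2ψ j)), ← hCbar i j]
    congr 1
    have hsq : ∀ f : Fin d → ℝ,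
        (γ * ∑ k, Pπ i k * (f k - fπ k)) * (γ * ∑ l, Pπ j l * (f l - fπ l))
        = ∑ k, ∑ l, (γ * Pπ i k) * (γ * Pπ j l) * ((f k - fπ k) * (f l - fπ l)) := by
      intro f
      simp only [Finset.mul_sum, Finset.sum_mul]
      rw [Finset.sum_comm]
      exact Finset.sum_congr rfl fun k _ => Finset.sum_congr rfl fun l _ => by ring
    rw [integral_congr_ae (Filter.Eventually.of_forall hsq),
      integral_finset_sum _ fun k _ => integrable_finset_sum _ fun l _ =>
        (l2_mul_integrable (hu2 k) (hu2 l)).const_mul _]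
    refine Finset.sum_congr rfl fun k _ => ?_
    rw [integral_finset_sum _ fun l _ => (l2_mul_integrable (hu2 k) (hu2 l)).const_mul _]
    exact Finset.sum_congr rfl fun l _ => by rw [integral_const_mul, ← hCov k l]
  -- the key scalar identity
  have key : ∀ i j, Cov i j
      = (1 - α) ^ 2 * Cov i j
        + α * (1 - α) * (γ * ∑ k, Pπ j k * Cov i k)
        + α * (1 - α) * (γ * ∑ k, Pπ i k * Cov k j)
        + α ^ 2 * (Cbar i j + ∑ k, ∑ l, (γ * Pπ i k) * (γ * Pπ j l) * Cov k l) := by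
    intro i j
    have hc : Continuous (fun f : Fin d → ℝ => (f i - fπ i) * (f j - fπ j)) :=
      ((continuous_apply i).sub continuous_const).mul ((continuous_apply j).sub continuous_const)
    have h0 : Cov i j = ∫ p : (Fin d → ℝ) × Ω,
        (((1 - α) • p.1 + α • That p.1 p.2) i - fπ i)
          * (((1 - α) • p.1 + α • That p.1 p.2) j - fπ j) ∂M := by
      rw [hCov i j, htrans _ hc]
    have hexp : ∀ p : (Fin d → ℝ) × Ω,
        (((1 - α) • p.1 + α • That p.1 p.2) i - fπ i)
          * (((1 - α) • p.1 + α • That p.1 p.2) j - fπ j)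
        = (1 - α) ^ 2 * ((p.1 i - fπ i) * (p.1 j - fπ j))
          + α * (1 - α) * ((p.1 i - fπ i) * (That p.1 p.2 j - fπ j))
          + α * (1 - α) * ((That p.1 p.2 i - fπ i) * (p.1 j - fπ j))
          + α ^ 2 * ((That p.1 p.2 i - fπ i) * (That p.1 p.2 j - fπ j)) := by
      intro p
      simp only [Pi.add_apply, Pi.smul_apply, smul_eq_mul]
      ring
    have hI1 := l2_mul_integrable (hX2 i) (hX2 j)
    have hI2 := l2_mul_integrable (hX2 i) (hY2 j)
    have hI3 := l2_mul_integrable (hY2 i) (hX2 j)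
    have hI4 := l2_mul_integrable (hY2 i) (hY2 j)
    conv_lhs => rw [h0]
    rw [integral_congr_ae (Filter.Eventually.of_forall hexp),
      integral_four_split hI1 hI2 hI3 hI4,
      hE1 i j, hE2 i j, hE3 i j, hE4 i j]
  -- assemble the matrix identity
  ext i j
  simp only [Matrix.smul_apply, Matrix.add_apply, Matrix.mul_apply, Matrix.transpose_apply,
    smul_eq_mul]
  have hsumQ : ∑ l, (∑ k, γ * Pπ i k * Cov k l) * (γ * Pπ j l)
      = ∑ k, ∑ l, (γ * Pπ i k) * (γ * Pπ j l) * Cov k l := by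
    simp only [Finset.sum_mul]
    rw [Finset.sum_comm]
    exact Finset.sum_congr rfl fun k _ => Finset.sum_congr rfl fun l _ => by ring
  have hsumL : ∑ k, γ * Pπ i k * Cov k j = γ * ∑ k, Pπ i k * Cov k j := by
    rw [Finset.mul_sum]
    exact Finset.sum_congr rfl fun k _ => by ring
  have hsumR : ∑ k, Cov i k * (γ * Pπ j k) = γ * ∑ k, Pπ j k * Cov i k := by
    rw [Finset.mul_sum]
    exact Finset.sum_congr rfl fun k _ => by ring
  rw [hsumQ, hsumL, hsumR]
  linear_combination key i j
end

section
/- Suppose T̂* is an empirical Bellman optimality operator (i.e. E_{ω∼η}[T̂*(f,ω)] = T* f for all f ∈ ℝ^d) such that the constant step-size updates f_{n+1} = (1−α)f_n + αT̂*(f_n,ω_n) converge to a stationary distribution ψ*_α with finite first moment. Let f_α ∼ ψ*_α and let f* be the fixed point of T*. Then E[f_α] ≥ f* componentwise, with equality if and only if expectation and the maximization defining T* commute on the stationary distribution. -/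
/-!
STATEMENT 5: If T̂* is an empirical Bellman optimality operator
(E_ω[T̂*(f,ω)] = T* f, where T* f = max_π T^π f over finitely many (affine)
Bellman operators) whose constant step-size updates have stationary
distribution ψ*_α with finite first moment, then E[f_α] ≥ f* componentwise
(f* the fixed point of T*), with equality iff expectation and the maximization
defining T* commute on the stationary distribution.
-/

open MeasureTheory

/-- The Bellman optimality operator `T* f = max_π T^π f`, the componentwise
maximum over a (finite) family of affine Bellman operators `T^π f = R^π + γ P^π f`. -/
noncomputable def bellmanOpt {d : ℕ} {ι : Type*} [Fintype ι] [Nonempty ι]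
    (Rp : ι → Fin d → ℝ) (Pp : ι → Matrix (Fin d) (Fin d) ℝ) (γ : ℝ)
    (f : Fin d → ℝ) : Fin d → ℝ :=
  fun i => ⨆ p : ι, (Rp p i + γ * (Pp p).mulVec f i)

/-- A measure `bind` against a kernel of the form `a ↦ η.map (G (a, ·))` with `G`
jointly measurable is the pushforward of the product measure under `G`. -/
lemma bind_map_prod_eq {A Ω B : Type*} [MeasurableSpace A] [MeasurableSpace Ω] [MeasurableSpace B]
    (ψ : Measure A) (η : Measure Ω) [SFinite η] (G : A × Ω → B) (hG : Measurable G) :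
    ψ.bind (fun a => η.map (fun ω => G (a, ω))) = (ψ.prod η).map G := by
  have hmeas : Measurable (fun a => η.map (fun ω => G (a, ω))) := by
    apply Measure.measurable_of_measurable_coe
    intro s hs
    have h1 : ∀ a, η.map (fun ω => G (a, ω)) s = η (Prod.mk a ⁻¹' (G ⁻¹' s)) := fun a => by
      rw [Measure.map_apply (show Measurable fun ω => G (a, ω) from
        hG.comp measurable_prodMk_left) hs]; rfl
    simp_rw [h1]
    exact measurable_measure_prodMk_left (hG hs)
  ext s hs
  rw [Measure.bind_apply hs hmeas.aemeasurable, Measure.map_apply hG hs, Measure.prod_apply (hG hs)]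
  refine lintegral_congr fun a => ?_
  rw [Measure.map_apply (show Measurable fun ω => G (a, ω) from
    hG.comp measurable_prodMk_left) hs]; rfl

/-- The Bellman optimality operator is a `γ`-contraction upwards:
`T* g i ≤ T* h i + γ * max_j (g j - h j)`. -/
lemma bellmanOpt_sub_le {d : ℕ} {ι : Type*} [Fintype ι] [Nonempty ι]
    (Rp : ι → Fin d → ℝ) (Pp : ι → Matrix (Fin d) (Fin d) ℝ)
    (hPnn : ∀ p i j, 0 ≤ Pp p i j) (hProw : ∀ p i, ∑ j, Pp p i j = 1)
    {γ : ℝ} (hγ0 : 0 ≤ γ) (g h : Fin d → ℝ) (i : Fin d)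
    (hne : (Finset.univ : Finset (Fin d)).Nonempty) :
    bellmanOpt Rp Pp γ g i ≤ bellmanOpt Rp Pp γ h i
      + γ * (Finset.univ.sup' hne fun j => g j - h j) := by
  refine ciSup_le fun p => ?_
  have hCle : ∀ j, g j - h j ≤ Finset.univ.sup' hne fun j => g j - h j := fun j =>
    Finset.le_sup' (fun j => g j - h j) (Finset.mem_univ j)
  set C := Finset.univ.sup' hne fun j => g j - h j with hC
  have hmv : (Pp p).mulVec g i ≤ (Pp p).mulVec h i + C := by
    have hdiff : (Pp p).mulVec g i - (Pp p).mulVec h i = ∑ j, Pp p i j * (g j - h j) := by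
      simp [Matrix.mulVec, dotProduct, mul_sub, Finset.sum_sub_distrib]
    have hle : ∑ j, Pp p i j * (g j - h j) ≤ ∑ j, Pp p i j * C :=
      Finset.sum_le_sum fun j _ => mul_le_mul_of_nonneg_left (hCle j) (hPnn p i j)
    have hsum : ∑ j, Pp p i j * C = C := by rw [← Finset.sum_mul, hProw, one_mul]
    linarith [hdiff, hle, hsum]
  have hb : Rp p i + γ * (Pp p).mulVec h i ≤ bellmanOpt Rp Pp γ h i := by
    show Rp p i + γ * (Pp p).mulVec h i ≤ ⨆ q : ι, (Rp q i + γ * (Pp q).mulVec h i)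
    exact le_ciSup (f := fun q : ι => Rp q i + γ * (Pp q).mulVec h i)
      (Set.Finite.bddAbove (Set.finite_range _)) p
  have := mul_le_mul_of_nonneg_left hmv hγ0
  linarith

/-- If `T* g ≤ g` componentwise and `h` is a fixed point of `T*`, then `h ≤ g`. -/
lemma bellmanOpt_fixedPoint_le {d : ℕ} {ι : Type*} [Fintype ι] [Nonempty ι]
    (Rp : ι → Fin d → ℝ) (Pp : ι → Matrix (Fin d) (Fin d) ℝ)
    (hPnn : ∀ p i j, 0 ≤ Pp p i j) (hProw : ∀ p i, ∑ j, Pp p i j = 1)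
    {γ : ℝ} (hγ0 : 0 ≤ γ) (hγ1 : γ < 1) (g h : Fin d → ℝ)
    (hg : ∀ i, bellmanOpt Rp Pp γ g i ≤ g i) (hh : bellmanOpt Rp Pp γ h = h) :
    h ≤ g := by
  intro i
  have hne : (Finset.univ : Finset (Fin d)).Nonempty := ⟨i, Finset.mem_univ i⟩
  obtain ⟨j0, -, hj0⟩ := Finset.exists_mem_eq_sup' hne fun j => h j - g j
  have hub : ∀ j, h j - g j ≤ h j0 - g j0 := fun j =>
    hj0 ▸ Finset.le_sup' (fun j => h j - g j) (Finset.mem_univ j)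
  have hcontr := bellmanOpt_sub_le Rp Pp hPnn hProw hγ0 h g j0 hne
  rw [hj0, hh] at hcontr
  have h1 := hg j0
  have hj00 : h j0 - g j0 ≤ 0 := by nlinarith
  linarith [hub i]

theorem stationary_mean_of_optimality_operator_overestimates
    {d : ℕ} {Ω ι : Type*} [MeasurableSpace Ω] [Fintype ι] [Nonempty ι]
    (η : Measure Ω) (hη : IsProbabilityMeasure η)
    -- the family of (affine) Bellman operators T^π f = R^π + γ P^π f
    (Rp : ι → Fin d → ℝ) (Pp : ι → Matrix (Fin d) (Fin d) ℝ)
    (hPnn : ∀ p i j, 0 ≤ Pp p i j) (hProw : ∀ p i, ∑ j, Pp p i j = 1)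
    (γ : ℝ) (hγ0 : 0 ≤ γ) (hγ1 : γ < 1)
    -- the stochastic operator, an empirical Bellman optimality operator
    (That : (Fin d → ℝ) → Ω → (Fin d → ℝ))
    (hEmp : ∀ f, ∫ ω, That f ω ∂η = bellmanOpt Rp Pp γ f)
    (α : ℝ) (hα0 : 0 < α) (hα1 : α ≤ 1)
    -- the stationary distribution of the update f ↦ (1−α) f + α T̂*(f,ω)
    (ψ : Measure (Fin d → ℝ)) (hψ : IsProbabilityMeasure ψ)
    (hstat : ψ.bind (fun f => η.map fun ω => (1 - α) • f + α • That f ω) = ψ)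
    -- finite first moment, and integrability of the (stochastic) targets
    (hmom : Integrable (id : (Fin d → ℝ) → (Fin d → ℝ)) ψ)
    (hTint : Integrable (fun p : (Fin d → ℝ) × Ω => That p.1 p.2) (ψ.prod η))
    (hTsint : Integrable (fun f => bellmanOpt Rp Pp γ f) ψ)
    -- the fixed point of T*
    (fstar : Fin d → ℝ) (hfix : bellmanOpt Rp Pp γ fstar = fstar) :
    fstar ≤ ∫ f, f ∂ψ
    ∧ ((∫ f, f ∂ψ) = fstar ↔
        (∫ f, bellmanOpt Rp Pp γ f ∂ψ) = bellmanOpt Rp Pp γ (∫ f, f ∂ψ)) := by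
  classical
  set m := ∫ f, f ∂ψ with hm
  set b := ∫ f, bellmanOpt Rp Pp γ f ∂ψ with hb
  -- a measurable modification of the stochastic operator
  have hTm := hTint.aestronglyMeasurable
  set T' := hTm.mk _ with hT'
  have hT'meas : StronglyMeasurable T' := hTm.stronglyMeasurable_mk
  have haeprod : (fun p : (Fin d → ℝ) × Ω => That p.1 p.2) =ᵐ[ψ.prod η] T' := hTm.ae_eq_mk
  set G : (Fin d → ℝ) × Ω → Fin d → ℝ := fun p => (1 - α) • p.1 + α • T' p with hGdef
  have hGmeas : Measurable G :=
    (measurable_fst.const_smul ((1:ℝ) - α)).add (hT'meas.measurable.const_smul α)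
  -- the stationary measure as a pushforward of the product measure
  have hbind2 : ψ.bind (fun f => η.map fun ω => (1 - α) • f + α • That f ω)
      = (ψ.prod η).map G := by
    rw [← bind_map_prod_eq ψ η G hGmeas]
    unfold Measure.bind
    congr 1
    apply Measure.map_congr
    filter_upwards [Measure.ae_ae_of_ae_prod haeprod] with f hf
    apply Measure.map_congr
    filter_upwards [hf] with ω hω
    simp only [hGdef, hω]
  -- integrability facts
  have hfst : Integrable (fun p : (Fin d → ℝ) × Ω => p.1) (ψ.prod η) := by
    rw [integrable_prod_iff measurable_fst.aestronglyMeasurable]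
    refine ⟨Filter.Eventually.of_forall fun x => integrable_const _, ?_⟩
    simpa [measure_univ] using hmom.norm
  have hT'int : Integrable T' (ψ.prod η) := hTint.congr haeprod
  have hcomp : ∀ j, Integrable (fun f : Fin d → ℝ => f j) ψ := fun j =>
    (ContinuousLinearMap.proj (R := ℝ) (φ := fun _ : Fin d => ℝ) j).integrable_comp hmom
  have hproj : ∀ (F : (Fin d → ℝ) → Fin d → ℝ), Integrable F ψ →
      ∀ i, (∫ f, F f ∂ψ) i = ∫ f, F f i ∂ψ := fun F hF i =>
    ((ContinuousLinearMap.proj (R := ℝ) (φ := fun _ : Fin d => ℝ) i).integral_comp_comm hF).symm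
  -- the key moment identity : m = (1-α) m + α b, hence m = b
  have hmb : m = b := by
    have hmint : m = ∫ p, G p ∂(ψ.prod η) := by
      conv_lhs => rw [hm, ← hstat, hbind2]
      rw [integral_map hGmeas.aemeasurable measurable_id'.aestronglyMeasurable]
    have hzero : ∫ p, T' p ∂(ψ.prod η) = b := by
      rw [integral_congr_ae haeprod.symm, integral_prod _ hTint]
      simp only [hEmp, hb]
    have hfirst : (∫ p : (Fin d → ℝ) × Ω, p.1 ∂(ψ.prod η)) = m := by
      rw [integral_fun_fst (f := fun x : Fin d → ℝ => x)]
      simp [measure_univ, hm]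
    have hsplit : ∫ p, G p ∂(ψ.prod η) = (1 - α) • m + α • b := by
      have hi1 : Integrable (fun p : (Fin d → ℝ) × Ω => (1 - α) • p.1) (ψ.prod η) := by
        exact hfst.smul ((1:ℝ) - α)
      have hi2 : Integrable (fun p : (Fin d → ℝ) × Ω => α • T' p) (ψ.prod η) := by
        exact hT'int.smul α
      simp only [hGdef]
      rw [integral_add hi1 hi2, integral_smul, integral_smul, hzero, hfirst]
    have h := hmint.trans hsplit
    have h5 : m - (1 - α) • m = α • b := by
      nth_rewrite 1 [h]; abel
    have h2 : α • m = α • b := by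
      rw [← h5, sub_smul, one_smul]; abel
    exact smul_right_injective _ (ne_of_gt hα0) h2
  -- Jensen: T* m ≤ b = m componentwise
  have hjen : ∀ i, bellmanOpt Rp Pp γ m i ≤ m i := by
    intro i
    have hbi : b i = ∫ f, bellmanOpt Rp Pp γ f i ∂ψ := hproj _ hTsint i
    have hmvint : ∀ p, Integrable (fun f : Fin d → ℝ => (Pp p).mulVec f i) ψ := by
      intro p
      simp only [Matrix.mulVec, dotProduct]
      exact integrable_finset_sum _ fun j _ => (hcomp j).const_mul _
    have hgoal : bellmanOpt Rp Pp γ m i ≤ b i := by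
      rw [hbi]
      refine ciSup_le fun p => ?_
      have haffint : Integrable (fun f : Fin d → ℝ => Rp p i + γ * (Pp p).mulVec f i) ψ :=
        (integrable_const _).add ((hmvint p).const_mul γ)
      have haffval : ∫ f, (Rp p i + γ * (Pp p).mulVec f i) ∂ψ
          = Rp p i + γ * (Pp p).mulVec m i := by
        rw [integral_add (integrable_const _) ((hmvint p).const_mul γ), integral_const,
          integral_const_mul]
        have hmv : ∫ f, (Pp p).mulVec f i ∂ψ = (Pp p).mulVec m i := by
          simp only [Matrix.mulVec, dotProduct]
          rw [integral_finset_sum _ fun j _ => (hcomp j).const_mul _]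
          refine Finset.sum_congr rfl fun j _ => ?_
          rw [integral_const_mul]
          congr 1
          exact (hproj (fun f => f) hmom j).symm
        rw [hmv]
        simp [measure_univ]
      have hmono : ∫ f, (Rp p i + γ * (Pp p).mulVec f i) ∂ψ
          ≤ ∫ f, bellmanOpt Rp Pp γ f i ∂ψ := by
        refine integral_mono haffint
          ((ContinuousLinearMap.proj (R := ℝ) (φ := fun _ : Fin d => ℝ) i).integrable_comp
            hTsint) fun f => ?_
        show Rp p i + γ * (Pp p).mulVec f i ≤ ⨆ q : ι, (Rp q i + γ * (Pp q).mulVec f i)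
        exact le_ciSup (f := fun q : ι => Rp q i + γ * (Pp q).mulVec f i)
          (Set.Finite.bddAbove (Set.finite_range _)) p
      rw [← haffval]
      exact hmono
    calc bellmanOpt Rp Pp γ m i ≤ b i := hgoal
      _ = m i := by rw [hmb]
  -- conclusion
  have hfm : fstar ≤ m :=
    bellmanOpt_fixedPoint_le Rp Pp hPnn hProw hγ0 hγ1 m fstar hjen hfix
  refine ⟨hfm, ?_, ?_⟩
  · intro h
    rw [← hmb, h]
    exact hfix.symm
  · intro h
    have hfixm : bellmanOpt Rp Pp γ m = m := by rw [← h, ← hmb]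
    refine le_antisymm ?_ hfm
    exact bellmanOpt_fixedPoint_le Rp Pp hPnn hProw hγ0 hγ1 fstar m
      (fun i => le_of_eq (congrFun hfix i)) hfixm
end

section
/- For step-size α = 1 and any initialization Q₀ ∼ μ₀ with finite first moment on ℝ^{|S|×|A|}, the sequence of random action-value functions (Q_n)_{n≥0} generated by optimistic policy iteration — Q_{n+1}(s,a) = G^{π_n}(s,a) where π_n is the greedy policy for Q_n and G^{π_n}(s,a) is an independently sampled discounted return from (s,a) following π_n — converges in distribution to a unique stationary distribution φ₁; equivalently, the induced finite Markov chain on deterministic policies with kernel K(π,π') = P{π' is greedy with respect to G^π} converges from every initial policy to a unique stationary distribution on policies. -/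
/-!
STATEMENT 6: For step-size α = 1, optimistic policy iteration converges in
distribution to a unique stationary distribution; equivalently, the induced
finite Markov chain on deterministic policies with kernel
K(π,π') = P{π' is greedy w.r.t. the sampled returns G^π} converges from every
initial distribution on policies to a unique stationary distribution.
-/

open MeasureTheory Filter

/-- The greedy policy for an action-value function `Q`, with the fixed consistent
tie-breaking rule given by a linear order on actions (least maximizer). -/
noncomputable def greedySel {S A : Type*} [Fintype A] [Nonempty A] [LinearOrder A]
    (Q : S → A → ℝ) (s : S) : A := by
  classical
  exact (Finset.univ.filter fun a => ∀ a', Q s a' ≤ Q s a).min' (by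
    obtain ⟨a, -, ha⟩ := Finset.exists_max_image Finset.univ (fun a => Q s a)
      ⟨Classical.arbitrary A, Finset.mem_univ _⟩
    exact ⟨a, Finset.mem_filter.mpr
      ⟨Finset.mem_univ _, fun a' => ha a' (Finset.mem_univ _)⟩⟩)

noncomputable def sel {A : Type*} [Fintype A] [Nonempty A] [LinearOrder A]
    (h : A → ℝ) : A := greedySel (fun _ : Unit => h) ()

lemma greedySel_eq_sel {S A : Type*} [Fintype A] [Nonempty A] [LinearOrder A]
    (Q : S → A → ℝ) (s : S) : greedySel Q s = sel (Q s) := rfl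

section selLemmas
variable {A : Type*} [Fintype A] [Nonempty A] [LinearOrder A]

set_option linter.unusedSectionVars false in
lemma selFilter_nonempty (h : A → ℝ) :
    (Finset.univ.filter fun a => ∀ a', h a' ≤ h a).Nonempty := by
  obtain ⟨a, -, ha⟩ := Finset.exists_max_image Finset.univ (fun a => h a)
    ⟨Classical.arbitrary A, Finset.mem_univ _⟩
  exact ⟨a, Finset.mem_filter.mpr ⟨Finset.mem_univ _, fun a' => ha a' (Finset.mem_univ _)⟩⟩

lemma sel_mem (h : A → ℝ) : sel h ∈ (Finset.univ.filter fun a => ∀ a', h a' ≤ h a) :=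
  Finset.min'_mem _ (selFilter_nonempty h)

lemma sel_isMax (h : A → ℝ) : ∀ a', h a' ≤ h (sel h) := by
  have := sel_mem h; rw [Finset.mem_filter] at this; exact this.2

lemma sel_le (h : A → ℝ) (b : A) (hb : ∀ a', h a' ≤ h b) : sel h ≤ b :=
  Finset.min'_le _ _ (Finset.mem_filter.mpr ⟨Finset.mem_univ _, hb⟩)

lemma eq_sel (h : A → ℝ) (a : A) (h1 : ∀ a', h a' ≤ h a)
    (h2 : ∀ b, (∀ a', h a' ≤ h b) → a ≤ b) : sel h = a :=
  le_antisymm (sel_le h a h1) (h2 _ (sel_isMax h))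

lemma sel_eq_iff (h : A → ℝ) (a : A) :
    sel h = a ↔ (∀ a', h a' ≤ h a) ∧ ∀ b, b < a → ¬ (∀ a', h a' ≤ h b) := by
  constructor
  · rintro rfl
    exact ⟨sel_isMax h, fun b hb hball => absurd (sel_le h b hball) (not_le.mpr hb)⟩
  · rintro ⟨h1, h2⟩
    exact eq_sel h a h1 fun b hb => not_lt.mp fun hlt => h2 b hlt hb

lemma measurableSet_sel_eq (a : A) : MeasurableSet {h : A → ℝ | sel h = a} := by
  have heq : {h : A → ℝ | sel h = a} =
      (⋂ a', {h : A → ℝ | h a' ≤ h a}) ∩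
        ⋂ b, ⋂ (_ : b < a), (⋂ a', {h : A → ℝ | h a' ≤ h b})ᶜ := by
    ext h
    simp only [Set.mem_setOf_eq, Set.mem_inter_iff, Set.mem_iInter, Set.mem_compl_iff,
      sel_eq_iff, Classical.not_forall]
  rw [heq]
  have hle : ∀ (b c : A), MeasurableSet {h : A → ℝ | h b ≤ h c} := fun b c =>
    measurableSet_le (measurable_pi_apply b) (measurable_pi_apply c)
  exact (MeasurableSet.iInter fun a' => hle a' a).inter
    (MeasurableSet.iInter fun b => MeasurableSet.iInter fun _ =>
      (MeasurableSet.iInter fun a' => hle a' b).compl)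

end selLemmas

lemma integrable_of_suppIcc (ν : Measure ℝ) [IsProbabilityMeasure ν] {C : ℝ}
    (hsupp : ν (Set.Icc 0 C)ᶜ = 0) : Integrable (fun x : ℝ => x) ν := by
  have hae : ∀ᵐ x ∂ν, x ∈ Set.Icc 0 C := by
    rw [ae_iff]; exact hsupp
  refine Integrable.mono' (integrable_const (max C 0)) measurable_id.aestronglyMeasurable ?_
  filter_upwards [hae] with x hx
  rw [Real.norm_eq_abs, abs_le]
  exact ⟨le_trans (neg_nonpos_of_nonneg (le_max_right C 0)) hx.1,
    le_trans hx.2 (le_max_left _ _)⟩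

lemma meas_Ici_mean_ne_zero (ν : Measure ℝ) [IsProbabilityMeasure ν] {C : ℝ}
    (hsupp : ν (Set.Icc 0 C)ᶜ = 0) : ν (Set.Ici (∫ x, x ∂ν)) ≠ 0 := by
  intro h0
  set m := ∫ x, x ∂ν with hm
  have hint := integrable_of_suppIcc ν hsupp
  have hae : ∀ᵐ x ∂ν, x < m := by
    rw [ae_iff]
    convert h0 using 2
    ext x; simp [Set.mem_Ici, not_lt]
  have h1 : ∫ x, (m - x) ∂ν = 0 := by
    rw [integral_sub (integrable_const m) hint, integral_const]
    simp [hm]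
  have hnn : 0 ≤ᵐ[ν] fun x => m - x := by
    filter_upwards [hae] with x hx
    simp only [Pi.zero_apply]; linarith
  have h2 := (integral_eq_zero_iff_of_nonneg_ae hnn ((integrable_const m).sub hint)).mp h1
  have hfalse : ∀ᵐ x ∂ν, False := by
    filter_upwards [h2, hae] with x h2x haex
    simp only [Pi.zero_apply] at h2x
    linarith
  obtain ⟨x, hx⟩ := hfalse.exists
  exact hx

lemma le_mean_of_Iio_null (ν : Measure ℝ) [IsProbabilityMeasure ν] {C t : ℝ}
    (hsupp : ν (Set.Icc 0 C)ᶜ = 0) (h : ν (Set.Iio t) = 0) : t ≤ ∫ x, x ∂ν := by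
  have hint := integrable_of_suppIcc ν hsupp
  have hae : ∀ᵐ x ∂ν, t ≤ x := by
    rw [ae_iff]
    convert h using 2
    ext x; simp [Set.mem_Iio, not_le]
  calc t = ∫ _x, t ∂ν := by simp
  _ ≤ ∫ x, x ∂ν := integral_mono_ae (integrable_const t) hint hae

lemma dirac_of_Iio_null (ν : Measure ℝ) [IsProbabilityMeasure ν] {C t : ℝ}
    (hsupp : ν (Set.Icc 0 C)ᶜ = 0) (hmean : (∫ x, x ∂ν) = t) (h : ν (Set.Iio t) = 0) :
    ν {t}ᶜ = 0 := by
  have hint := integrable_of_suppIcc ν hsupp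
  have hae : ∀ᵐ x ∂ν, t ≤ x := by
    rw [ae_iff]
    convert h using 2
    ext x; simp [Set.mem_Iio, not_le]
  have h1 : ∫ x, (x - t) ∂ν = 0 := by
    rw [integral_sub hint (integrable_const t), integral_const]
    simp [hmean]
  have hnn : 0 ≤ᵐ[ν] fun x => x - t := by
    filter_upwards [hae] with x hx
    simp only [Pi.zero_apply]; linarith
  have h2 := (integral_eq_zero_iff_of_nonneg_ae hnn (hint.sub (integrable_const t))).mp h1
  rw [show ({t}ᶜ : Set ℝ) = {x : ℝ | ¬ x = t} by ext x; simp, ← ae_iff]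
  filter_upwards [h2] with x h2x
  simp only [Pi.zero_apply] at h2x
  linarith

lemma pi_sel_mean_ne_zero {A : Type*} [Fintype A] [Nonempty A] [LinearOrder A]
    (ν : A → Measure ℝ) (hprob : ∀ a, IsProbabilityMeasure (ν a)) {C : ℝ}
    (hsupp : ∀ a, ν a (Set.Icc 0 C)ᶜ = 0)
    (m : A → ℝ) (hmean : ∀ a, (∫ x, x ∂ν a) = m a) :
    (Measure.pi ν) {h : A → ℝ | sel h = sel m} ≠ 0 := by
  classical
  haveI := hprob
  set a0 := sel m with ha0
  have hmax : ∀ a, m a ≤ m a0 := sel_isMax m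
  set E : A → Set ℝ := fun b =>
    if b = a0 then Set.Ici (m a0)
    else if ν b (Set.Iio (m a0)) = 0 then {m a0} else Set.Iio (m a0) with hE
  have hmeasE : ∀ b, MeasurableSet (E b) := by
    intro b; rw [hE]; dsimp only
    split_ifs
    · exact measurableSet_Ici
    · exact measurableSet_singleton _
    · exact measurableSet_Iio
  have hposE : ∀ b, ν b (E b) ≠ 0 := by
    intro b; rw [hE]; dsimp only
    split_ifs with h1 h2
    · rw [h1, ← hmean a0]
      exact meas_Ici_mean_ne_zero (ν a0) (hsupp a0)
    · intro h0
      have hmb : (∫ x, x ∂ν b) = m a0 := by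
        have h3 := le_mean_of_Iio_null (ν b) (hsupp b) h2
        rw [hmean b] at h3
        rw [hmean b]
        exact le_antisymm (hmax b) h3
      have hcompl := dirac_of_Iio_null (ν b) (hsupp b) hmb h2
      have hle := measure_union_le (μ := ν b) {m a0} ({m a0}ᶜ : Set ℝ)
      rw [Set.union_compl_self, h0, hcompl, measure_univ] at hle
      simp at hle
    · exact h2
  have ha0lt : ∀ b, b ≠ a0 → ν b (Set.Iio (m a0)) = 0 → a0 < b := by
    intro b hb h2
    have h3 := le_mean_of_Iio_null (ν b) (hsupp b) h2
    rw [hmean b] at h3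
    have hmb : m b = m a0 := le_antisymm (hmax b) h3
    have : a0 ≤ b := sel_le m b (fun a' => hmb ▸ hmax a')
    exact lt_of_le_of_ne this (Ne.symm hb)
  have hsub : Set.univ.pi E ⊆ {h : A → ℝ | sel h = a0} := by
    intro h hh
    have hhb : ∀ b, h b ∈ E b := fun b => hh b (Set.mem_univ b)
    have hA : m a0 ≤ h a0 := by
      have := hhb a0; rw [hE] at this; simpa using this
    have hother : ∀ b, b ≠ a0 → (h b < m a0 ∨ (h b = m a0 ∧ a0 < b)) := by
      intro b hb
      have hmem := hhb b; rw [hE] at hmem; dsimp only at hmem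
      rw [if_neg hb] at hmem
      by_cases h2 : ν b (Set.Iio (m a0)) = 0
      · rw [if_pos h2] at hmem
        exact Or.inr ⟨hmem, ha0lt b hb h2⟩
      · rw [if_neg h2] at hmem
        exact Or.inl hmem
    show sel h = a0
    refine eq_sel h a0 ?_ ?_
    · intro a'
      by_cases ha' : a' = a0
      · subst ha'; exact le_rfl
      · rcases hother a' ha' with h1 | ⟨h1, -⟩
        · linarith
        · linarith
    · intro c hc
      by_cases hc0 : c = a0
      · exact hc0 ▸ le_rfl
      · rcases hother c hc0 with h1 | ⟨-, h2⟩
        · exact absurd (le_trans hA (hc a0)) (not_le.mpr h1)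
        · exact le_of_lt h2
  intro h0
  have hz : (Measure.pi ν) (Set.univ.pi E) = 0 := measure_mono_null hsub h0
  rw [Measure.pi_pi] at hz
  rcases Finset.prod_eq_zero_iff.mp hz with ⟨b, -, hb⟩
  exact hposE b hb

section doeblin
set_option linter.unusedSectionVars false
variable {P : Type*} [Fintype P] [DecidableEq P] [Nonempty P]

/-- One step of a finite Markov chain acting on (signed) distributions. -/
noncomputable def mstep (K : P → P → ℝ) (μ : P → ℝ) : P → ℝ := fun q => ∑ p, μ p * K p q

/-- n-step transition kernel. -/
noncomputable def powK (K : P → P → ℝ) (n : ℕ) (p q : P) : ℝ :=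
  (mstep K)^[n] (fun p' => if p' = p then 1 else 0) q

variable {K : P → P → ℝ}

lemma mstep_sum (hK1 : ∀ p, ∑ q, K p q = 1) (μ : P → ℝ) :
    ∑ q, mstep K μ q = ∑ p, μ p := by
  unfold mstep
  rw [Finset.sum_comm]
  refine Finset.sum_congr rfl fun p _ => ?_
  rw [← Finset.mul_sum, hK1, mul_one]

lemma mstep_nonneg (hK0 : ∀ p q, 0 ≤ K p q) (μ : P → ℝ) (hμ : ∀ p, 0 ≤ μ p) (q : P) :
    0 ≤ mstep K μ q :=
  Finset.sum_nonneg fun p _ => mul_nonneg (hμ p) (hK0 p q)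

lemma iter_sum (hK1 : ∀ p, ∑ q, K p q = 1) (n : ℕ) (μ : P → ℝ) :
    ∑ q, (mstep K)^[n] μ q = ∑ p, μ p := by
  induction n with
  | zero => simp
  | succ n ih => rw [Function.iterate_succ_apply', mstep_sum hK1, ih]

lemma iter_nonneg (hK0 : ∀ p q, 0 ≤ K p q) (n : ℕ) (μ : P → ℝ) (hμ : ∀ p, 0 ≤ μ p) (q : P) :
    0 ≤ (mstep K)^[n] μ q := by
  induction n generalizing μ q with
  | zero => simpa using hμ q
  | succ n ih =>
    rw [Function.iterate_succ_apply]
    exact ih _ (mstep_nonneg hK0 μ hμ) q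

lemma iter_eq_powK (n : ℕ) (μ : P → ℝ) (q : P) :
    (mstep K)^[n] μ q = ∑ p, μ p * powK K n p q := by
  induction n generalizing q with
  | zero =>
    simp [powK, Finset.sum_ite_eq]
  | succ n ih =>
    rw [Function.iterate_succ_apply']
    unfold mstep
    calc ∑ r, (mstep K)^[n] μ r * K r q
        = ∑ r, (∑ p, μ p * powK K n p r) * K r q := by
          refine Finset.sum_congr rfl fun r _ => by rw [ih]
      _ = ∑ p, μ p * ∑ r, powK K n p r * K r q := by
          simp only [Finset.sum_mul, Finset.mul_sum]
          rw [Finset.sum_comm]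
          exact Finset.sum_congr rfl fun p _ => Finset.sum_congr rfl fun r _ => by ring
      _ = ∑ p, μ p * powK K (n + 1) p q := by
          refine Finset.sum_congr rfl fun p _ => ?_
          congr 1
          rw [powK, Function.iterate_succ_apply']
          rfl

lemma powK_nonneg (hK0 : ∀ p q, 0 ≤ K p q) (n : ℕ) (p q : P) : 0 ≤ powK K n p q :=
  iter_nonneg hK0 n _ (fun p' => by by_cases h : p' = p <;> simp [h]) q

lemma powK_rowsum (hK1 : ∀ p, ∑ q, K p q = 1) (n : ℕ) (p : P) : ∑ q, powK K n p q = 1 := by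
  unfold powK
  rw [iter_sum hK1]
  simp

lemma powK_succ (n : ℕ) (p q : P) :
    powK K (n + 1) p q = ∑ r, powK K n p r * K r q := by
  rw [powK, Function.iterate_succ_apply']
  rfl

lemma powK_pos_path (hK0 : ∀ p q, 0 ≤ K p q) (g : P → P) (hKg : ∀ p, 0 < K p (g p))
    (n : ℕ) (p : P) : 0 < powK K n p (g^[n] p) := by
  induction n with
  | zero => simp [powK]
  | succ n ih =>
    rw [powK_succ, Function.iterate_succ_apply']
    refine Finset.sum_pos' (fun r _ => mul_nonneg (powK_nonneg hK0 n p r) (hK0 r _)) ?_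
    exact ⟨g^[n] p, Finset.mem_univ _, mul_pos ih (hKg _)⟩

/-- ℓ¹ distance between two vectors. -/
noncomputable def dtv (μ ν : P → ℝ) : ℝ := ∑ p, |μ p - ν p|

lemma dtv_nonneg (μ ν : P → ℝ) : 0 ≤ dtv μ ν :=
  Finset.sum_nonneg fun p _ => abs_nonneg _

lemma abs_le_dtv (μ ν : P → ℝ) (q : P) : |μ q - ν q| ≤ dtv μ ν :=
  Finset.single_le_sum (fun p _ => abs_nonneg (μ p - ν p)) (Finset.mem_univ q)

lemma dtv_le_two (μ ν : P → ℝ) (hμ : ∀ p, 0 ≤ μ p) (hμ1 : ∑ p, μ p = 1)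
    (hν : ∀ p, 0 ≤ ν p) (hν1 : ∑ p, ν p = 1) : dtv μ ν ≤ 2 := by
  have : dtv μ ν ≤ ∑ p, (μ p + ν p) := by
    refine Finset.sum_le_sum fun p _ => ?_
    calc |μ p - ν p| ≤ |μ p| + |ν p| := abs_sub _ _
      _ = μ p + ν p := by rw [abs_of_nonneg (hμ p), abs_of_nonneg (hν p)]
  rw [Finset.sum_add_distrib, hμ1, hν1] at this
  linarith

/-- Minorized-kernel contraction on mean-zero differences. -/
lemma mstep_contract (hK0 : ∀ p q, 0 ≤ K p q) (hK1 : ∀ p, ∑ q, K p q = 1)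
    (qhat : P) {δ : ℝ} (hδ : ∀ p, δ ≤ K p qhat) (μ ν : P → ℝ)
    (hsum : ∑ p, μ p = ∑ p, ν p) :
    dtv (mstep K μ) (mstep K ν) ≤ (1 - δ) * dtv μ ν := by
  have hker : ∀ p q, 0 ≤ K p q - (if q = qhat then δ else 0) := by
    intro p q
    split_ifs with h
    · subst h; linarith [hδ p]
    · simpa using hK0 p q
  have hrow : ∀ p, ∑ q, (K p q - if q = qhat then δ else 0) = 1 - δ := by
    intro p
    rw [Finset.sum_sub_distrib, hK1, Finset.sum_ite_eq' Finset.univ qhat (fun _ => δ)]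
    simp
  have hz : ∑ p, (μ p - ν p) = 0 := by rw [Finset.sum_sub_distrib, hsum, sub_self]
  have hdiff : ∀ q, mstep K μ q - mstep K ν q
      = ∑ p, (μ p - ν p) * (K p q - if q = qhat then δ else 0) := by
    intro q
    unfold mstep
    rw [← Finset.sum_sub_distrib]
    calc ∑ p, (μ p * K p q - ν p * K p q)
        = ∑ p, ((μ p - ν p) * (K p q - if q = qhat then δ else 0)
            + (μ p - ν p) * (if q = qhat then δ else 0)) :=
          Finset.sum_congr rfl fun p _ => by ring
      _ = (∑ p, (μ p - ν p) * (K p q - if q = qhat then δ else 0))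
            + (∑ p, (μ p - ν p)) * (if q = qhat then δ else 0) := by
          rw [Finset.sum_add_distrib, Finset.sum_mul]
      _ = ∑ p, (μ p - ν p) * (K p q - if q = qhat then δ else 0) := by
          rw [hz, zero_mul, add_zero]
  calc dtv (mstep K μ) (mstep K ν)
      = ∑ q, |∑ p, (μ p - ν p) * (K p q - if q = qhat then δ else 0)| :=
        Finset.sum_congr rfl fun q _ => by rw [hdiff q]
    _ ≤ ∑ q, ∑ p, |μ p - ν p| * (K p q - if q = qhat then δ else 0) := by
        refine Finset.sum_le_sum fun q _ => ?_
        refine (Finset.abs_sum_le_sum_abs _ _).trans ?_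
        refine Finset.sum_le_sum fun p _ => ?_
        rw [abs_mul, abs_of_nonneg (hker p q)]
    _ = ∑ p, |μ p - ν p| * (1 - δ) := by
        rw [Finset.sum_comm]
        exact Finset.sum_congr rfl fun p _ => by rw [← Finset.mul_sum, hrow]
    _ = (1 - δ) * dtv μ ν := by
        rw [dtv, ← Finset.sum_mul, mul_comm]

lemma iter_block_contract (hK0 : ∀ p q, 0 ≤ K p q) (hK1 : ∀ p, ∑ q, K p q = 1)
    (N : ℕ) (phat : P) {δ : ℝ} (hδ1 : δ ≤ 1) (hminor : ∀ p, δ ≤ powK K N p phat)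
    (k : ℕ) (μ ν : P → ℝ) (hsum : ∑ p, μ p = ∑ p, ν p) :
    dtv ((mstep K)^[k * N] μ) ((mstep K)^[k * N] ν) ≤ (1 - δ) ^ k * dtv μ ν := by
  induction k with
  | zero => simp
  | succ k ih =>
    have hNstep : ∀ ρ σ : P → ℝ, (∑ p, ρ p = ∑ p, σ p) →
        dtv ((mstep K)^[N] ρ) ((mstep K)^[N] σ) ≤ (1 - δ) * dtv ρ σ := by
      intro ρ σ h
      have heq : ∀ τ : P → ℝ, (mstep K)^[N] τ = mstep (powK K N) τ := by
        intro τ; funext q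
        rw [iter_eq_powK]; rfl
      rw [heq ρ, heq σ]
      exact mstep_contract (K := powK K N) (powK_nonneg hK0 N) (powK_rowsum hK1 N)
        phat hminor ρ σ h
    have hksucc : (k + 1) * N = N + k * N := by ring
    rw [hksucc]
    rw [Function.iterate_add_apply, Function.iterate_add_apply]
    calc dtv ((mstep K)^[N] ((mstep K)^[k * N] μ)) ((mstep K)^[N] ((mstep K)^[k * N] ν))
        ≤ (1 - δ) * dtv ((mstep K)^[k * N] μ) ((mstep K)^[k * N] ν) := by
          refine hNstep _ _ ?_
          rw [iter_sum hK1, iter_sum hK1, hsum]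
      _ ≤ (1 - δ) * ((1 - δ) ^ k * dtv μ ν) := by
          refine mul_le_mul_of_nonneg_left (ih) (by linarith)
      _ = (1 - δ) ^ (k + 1) * dtv μ ν := by ring

lemma iter_est (hK0 : ∀ p q, 0 ≤ K p q) (hK1 : ∀ p, ∑ q, K p q = 1)
    (N : ℕ) (phat : P) {δ : ℝ} (hδ1 : δ ≤ 1) (hminor : ∀ p, δ ≤ powK K N p phat)
    (μ ν : P → ℝ) (hμ0 : ∀ p, 0 ≤ μ p) (hμ1 : ∑ p, μ p = 1)
    (hν0 : ∀ p, 0 ≤ ν p) (hν1 : ∑ p, ν p = 1)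
    (k n : ℕ) (hn : k * N ≤ n) :
    dtv ((mstep K)^[n] μ) ((mstep K)^[n] ν) ≤ (1 - δ) ^ k * 2 := by
  have hrep : k * N + (n - k * N) = n := Nat.add_sub_cancel' hn
  rw [← hrep, Function.iterate_add_apply, Function.iterate_add_apply]
  set r := n - k * N
  calc dtv ((mstep K)^[k * N] ((mstep K)^[r] μ)) ((mstep K)^[k * N] ((mstep K)^[r] ν))
      ≤ (1 - δ) ^ k * dtv ((mstep K)^[r] μ) ((mstep K)^[r] ν) := by
        refine iter_block_contract hK0 hK1 N phat hδ1 hminor k _ _ ?_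
        rw [iter_sum hK1, iter_sum hK1, hμ1, hν1]
    _ ≤ (1 - δ) ^ k * 2 := by
        refine mul_le_mul_of_nonneg_left ?_ (pow_nonneg (by linarith) k)
        exact dtv_le_two _ _ (iter_nonneg hK0 r μ hμ0) (by rw [iter_sum hK1, hμ1])
          (iter_nonneg hK0 r ν hν0) (by rw [iter_sum hK1, hν1])

lemma doeblin_main (K : P → P → ℝ) (hK0 : ∀ p q, 0 ≤ K p q) (hK1 : ∀ p, ∑ q, K p q = 1)
    (g : P → P) (hKg : ∀ p, 0 < K p (g p)) (N : ℕ) (phat : P) (hg : ∀ p, g^[N] p = phat) :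
    ∃ φ : P → ℝ, (∀ p, 0 ≤ φ p) ∧ (∑ p, φ p = 1) ∧ mstep K φ = φ ∧
      (∀ φ' : P → ℝ, (∀ p, 0 ≤ φ' p) → (∑ p, φ' p = 1) → mstep K φ' = φ' → φ' = φ) ∧
      (∀ μ : P → ℝ, (∀ p, 0 ≤ μ p) → (∑ p, μ p = 1) →
        Tendsto (fun n => (mstep K)^[n] μ) atTop (nhds φ)) := by
  classical
  -- the Doeblin minorization constant
  set δ : ℝ := Finset.univ.inf' Finset.univ_nonempty (fun p => powK K N p phat) with hδdef
  have hminor : ∀ p, δ ≤ powK K N p phat := fun p =>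
    Finset.inf'_le _ (Finset.mem_univ p)
  have hδpos : 0 < δ := by
    rw [hδdef, Finset.lt_inf'_iff]
    intro p _
    have := powK_pos_path hK0 g hKg N p
    rwa [hg p] at this
  have hδ1 : δ ≤ 1 := by
    obtain ⟨p⟩ := ‹Nonempty P›
    refine (hminor p).trans ?_
    have h1 : powK K N p phat ≤ ∑ q, powK K N p q :=
      Finset.single_le_sum (fun q _ => powK_nonneg hK0 N p q) (Finset.mem_univ phat)
    rwa [powK_rowsum hK1] at h1
  have hgeo : Tendsto (fun k : ℕ => (1 - δ) ^ k * 2) atTop (nhds 0) := by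
    have h1 : Tendsto (fun k : ℕ => (1 - δ) ^ k) atTop (nhds 0) :=
      tendsto_pow_atTop_nhds_zero_of_lt_one (by linarith) (by linarith)
    simpa using h1.mul_const 2
  -- the reference orbit
  set μu : P → ℝ := fun _ => (Fintype.card P : ℝ)⁻¹ with hμu
  have hcard : (0 : ℝ) < Fintype.card P := by
    have := Fintype.card_pos (α := P)
    exact_mod_cast this
  have hμu0 : ∀ p, 0 ≤ μu p := fun p => by
    rw [hμu]; positivity
  have hμu1 : ∑ p, μu p = 1 := by
    rw [hμu]
    simp [Finset.sum_const, Finset.card_univ]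
  set u : ℕ → P → ℝ := fun n => (mstep K)^[n] μu with hu
  have hun0 : ∀ n p, 0 ≤ u n p := fun n p => iter_nonneg hK0 n μu hμu0 p
  have hun1 : ∀ n, ∑ p, u n p = 1 := fun n => by rw [hu]; rw [iter_sum hK1, hμu1]
  -- Cauchy in each coordinate
  have hcauchy : ∀ q, CauchySeq (fun n => u n q) := by
    intro q
    rw [Metric.cauchySeq_iff']
    intro ε hε
    obtain ⟨k, hk⟩ := exists_pow_lt_of_lt_one (by linarith : (0:ℝ) < ε / 2)
      (by linarith : 1 - δ < 1)
    refine ⟨k * N, fun n hn => ?_⟩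
    have hdist : dist (u n q) (u (k * N) q) ≤ dtv (u n) (u (k * N)) := by
      rw [Real.dist_eq]
      exact abs_le_dtv _ _ q
    refine lt_of_le_of_lt hdist ?_
    have hest : dtv (u n) (u (k * N)) ≤ (1 - δ) ^ k * 2 := by
      have hrep : u n = (mstep K)^[k * N] ((mstep K)^[n - k * N] μu) := by
        show (mstep K)^[n] μu = _
        rw [← Function.iterate_add_apply, Nat.add_sub_cancel' hn]
      have hrep2 : u (k * N) = (mstep K)^[k * N] μu := rfl
      rw [hrep, hrep2]
      have h2 := iter_block_contract hK0 hK1 N phat hδ1 hminor k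
        ((mstep K)^[n - k * N] μu) μu (by rw [iter_sum hK1])
      refine h2.trans ?_
      refine mul_le_mul_of_nonneg_left ?_ (pow_nonneg (by linarith) k)
      exact dtv_le_two _ _ (iter_nonneg hK0 _ μu hμu0) (by rw [iter_sum hK1, hμu1])
        hμu0 hμu1
    calc dtv (u n) (u (k * N)) ≤ (1 - δ) ^ k * 2 := hest
      _ < (ε / 2) * 2 := by nlinarith
      _ = ε := by ring
  choose φ hφ using fun q => cauchySeq_tendsto_of_complete (hcauchy q)
  have htend : ∀ q, Tendsto (fun n => u n q) atTop (nhds (φ q)) := hφ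
  have hφ0 : ∀ p, 0 ≤ φ p := fun p =>
    ge_of_tendsto' (htend p) (fun n => hun0 n p)
  have hφ1 : ∑ p, φ p = 1 := by
    have h1 : Tendsto (fun n => ∑ p, u n p) atTop (nhds (∑ p, φ p)) :=
      tendsto_finset_sum _ (fun p _ => htend p)
    have h2 : Tendsto (fun n => ∑ p, u n p) atTop (nhds 1) := by
      simp only [hun1]
      exact tendsto_const_nhds
    exact tendsto_nhds_unique h1 h2
  have hφfix : mstep K φ = φ := by
    funext q
    have h1 : Tendsto (fun n => u (n + 1) q) atTop (nhds (φ q)) :=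
      (htend q).comp (tendsto_add_atTop_nat 1)
    have h2 : Tendsto (fun n => u (n + 1) q) atTop (nhds (mstep K φ q)) := by
      have heq : ∀ n, u (n + 1) q = ∑ p, u n p * K p q := by
        intro n
        show (mstep K)^[n+1] μu q = _
        rw [Function.iterate_succ_apply']
        rfl
      simp only [heq]
      exact tendsto_finset_sum _ (fun p _ => (htend p).mul_const (K p q))
    exact tendsto_nhds_unique h2 h1
  -- convergence from an arbitrary initial distribution
  have hconv : ∀ μ : P → ℝ, (∀ p, 0 ≤ μ p) → (∑ p, μ p = 1) →
      Tendsto (fun n => (mstep K)^[n] μ) atTop (nhds φ) := by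
    intro μ hμ0 hμ1
    rw [tendsto_pi_nhds]
    intro q
    rw [Metric.tendsto_atTop]
    intro ε hε
    obtain ⟨k, hk⟩ := exists_pow_lt_of_lt_one (by linarith : (0:ℝ) < ε / 2)
      (by linarith : 1 - δ < 1)
    refine ⟨k * N, fun n hn => ?_⟩
    have hφiter : (mstep K)^[n] φ = φ := Function.iterate_fixed hφfix n
    have hdist : dist ((mstep K)^[n] μ q) (φ q) ≤ dtv ((mstep K)^[n] μ) ((mstep K)^[n] φ) := by
      rw [Real.dist_eq, hφiter]
      exact abs_le_dtv _ _ q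
    refine lt_of_le_of_lt hdist ?_
    have hest := iter_est hK0 hK1 N phat hδ1 hminor μ φ hμ0 hμ1 hφ0 hφ1 k n hn
    calc dtv ((mstep K)^[n] μ) ((mstep K)^[n] φ) ≤ (1 - δ) ^ k * 2 := hest
      _ < (ε / 2) * 2 := by nlinarith
      _ = ε := by ring
  -- uniqueness
  have huniq : ∀ φ' : P → ℝ, (∀ p, 0 ≤ φ' p) → (∑ p, φ' p = 1) → mstep K φ' = φ' → φ' = φ := by
    intro φ' hφ'0 hφ'1 hφ'fix
    have hbound : ∀ k : ℕ, dtv φ' φ ≤ (1 - δ) ^ k * 2 := by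
      intro k
      have h1 : (mstep K)^[k * N] φ' = φ' := Function.iterate_fixed hφ'fix _
      have h2 : (mstep K)^[k * N] φ = φ := Function.iterate_fixed hφfix _
      have := iter_est hK0 hK1 N phat hδ1 hminor φ' φ hφ'0 hφ'1 hφ0 hφ1 k (k * N) le_rfl
      rwa [h1, h2] at this
    have hle0 : dtv φ' φ ≤ 0 := ge_of_tendsto' hgeo hbound
    have h0 : dtv φ' φ = 0 := le_antisymm hle0 (dtv_nonneg _ _)
    funext q
    have h1 : |φ' q - φ q| ≤ 0 := h0 ▸ abs_le_dtv φ' φ q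
    have h2 : |φ' q - φ q| = 0 := le_antisymm h1 (abs_nonneg _)
    have := abs_eq_zero.mp h2
    linarith
  exact ⟨φ, hφ0, hφ1, hφfix, huniq, hconv⟩
end doeblin

section mdp
set_option linter.unusedSectionVars false
variable {S A : Type*} [Fintype S] [Nonempty S] [Fintype A] [Nonempty A] [LinearOrder A]
variable {γ : ℝ} {P : S → A → S → ℝ} {rbar : S → A → ℝ} {Qpi : (S → A) → S → A → ℝ}

lemma nonpos_of_le_gamma_avg (hγ0 : 0 ≤ γ) (hγ1 : γ < 1)
    (p : S → S → ℝ) (hp0 : ∀ s s', 0 ≤ p s s') (hp1 : ∀ s, ∑ s', p s s' = 1)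
    (d : S → ℝ) (hd : ∀ s, d s ≤ γ * ∑ s', p s s' * d s') : ∀ s, d s ≤ 0 := by
  obtain ⟨s0, -, hs0⟩ := Finset.exists_max_image Finset.univ d
    ⟨Classical.arbitrary S, Finset.mem_univ _⟩
  have h1 : ∑ s', p s0 s' * d s' ≤ d s0 := by
    calc ∑ s', p s0 s' * d s' ≤ ∑ s', p s0 s' * d s0 :=
          Finset.sum_le_sum fun s' _ =>
            mul_le_mul_of_nonneg_left (hs0 s' (Finset.mem_univ _)) (hp0 s0 s')
      _ = d s0 := by rw [← Finset.sum_mul, hp1, one_mul]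
  have h2 : d s0 ≤ γ * d s0 := (hd s0).trans (mul_le_mul_of_nonneg_left h1 hγ0)
  have h3 : d s0 ≤ 0 := by nlinarith
  exact fun s => (hs0 s (Finset.mem_univ s)).trans h3

/-- Policy improvement. -/
lemma value_improve (hγ0 : 0 ≤ γ) (hγ1 : γ < 1)
    (hPnn : ∀ s a s', 0 ≤ P s a s') (hProw : ∀ s a, ∑ s', P s a s' = 1)
    (hbell : ∀ π s a, Qpi π s a = rbar s a + γ * ∑ s', P s a s' * Qpi π s' (π s'))
    (π π' : S → A) (himp : ∀ s, Qpi π s (π s) ≤ Qpi π s (π' s)) :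
    ∀ s, Qpi π s (π s) ≤ Qpi π' s (π' s) := by
  have key : ∀ s, Qpi π s (π s) - Qpi π' s (π' s)
      ≤ γ * ∑ s', P s (π' s) s' * (Qpi π s' (π s') - Qpi π' s' (π' s')) := by
    intro s
    have hsum : ∑ s', P s (π' s) s' * (Qpi π s' (π s') - Qpi π' s' (π' s'))
        = (∑ s', P s (π' s) s' * Qpi π s' (π s'))
          - ∑ s', P s (π' s) s' * Qpi π' s' (π' s') := by
      rw [← Finset.sum_sub_distrib]
      exact Finset.sum_congr rfl fun s' _ => by ring
    have h1 : Qpi π s (π' s) - Qpi π' s (π' s)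
        = γ * ∑ s', P s (π' s) s' * (Qpi π s' (π s') - Qpi π' s' (π' s')) := by
      rw [hbell π s (π' s), hbell π' s (π' s), hsum]
      ring
    linarith [himp s, h1]
  have := nonpos_of_le_gamma_avg hγ0 hγ1 (fun s => P s (π' s)) (fun s => hPnn s (π' s))
    (fun s => hProw s (π' s)) (fun s => Qpi π s (π s) - Qpi π' s (π' s)) key
  intro s
  linarith [show Qpi π s (π s) - Qpi π' s (π' s) ≤ 0 from this s]

/-- A self-greedy policy dominates every policy. -/
lemma value_dominant (hγ0 : 0 ≤ γ) (hγ1 : γ < 1)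
    (hPnn : ∀ s a s', 0 ≤ P s a s') (hProw : ∀ s a, ∑ s', P s a s' = 1)
    (hbell : ∀ π s a, Qpi π s a = rbar s a + γ * ∑ s', P s a s' * Qpi π s' (π s'))
    (π : S → A) (hdom : ∀ s a, Qpi π s a ≤ Qpi π s (π s)) (μ : S → A) :
    ∀ s, Qpi μ s (μ s) ≤ Qpi π s (π s) := by
  have key : ∀ s, Qpi μ s (μ s) - Qpi π s (π s)
      ≤ γ * ∑ s', P s (μ s) s' * (Qpi μ s' (μ s') - Qpi π s' (π s')) := by
    intro s
    have hsum : ∑ s', P s (μ s) s' * (Qpi μ s' (μ s') - Qpi π s' (π s'))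
        = (∑ s', P s (μ s) s' * Qpi μ s' (μ s'))
          - ∑ s', P s (μ s) s' * Qpi π s' (π s') := by
      rw [← Finset.sum_sub_distrib]
      exact Finset.sum_congr rfl fun s' _ => by ring
    have h1 : Qpi μ s (μ s) - Qpi π s (μ s)
        = γ * ∑ s', P s (μ s) s' * (Qpi μ s' (μ s') - Qpi π s' (π s')) := by
      rw [hbell μ s (μ s), hbell π s (μ s), hsum]
      ring
    linarith [hdom s (μ s), h1]
  have := nonpos_of_le_gamma_avg hγ0 hγ1 (fun s => P s (μ s)) (fun s => hPnn s (μ s))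
    (fun s => hProw s (μ s)) (fun s => Qpi μ s (μ s) - Qpi π s (π s)) key
  intro s
  linarith [show Qpi μ s (μ s) - Qpi π s (π s) ≤ 0 from this s]

lemma greedy_fixed_reach [DecidableEq S] (hγ0 : 0 ≤ γ) (hγ1 : γ < 1)
    (hPnn : ∀ s a s', 0 ≤ P s a s') (hProw : ∀ s a, ∑ s', P s a s' = 1)
    (hbell : ∀ π s a, Qpi π s a = rbar s a + γ * ∑ s', P s a s' * Qpi π s' (π s')) :
    ∃ phat : S → A, ∀ π : S → A,
      (fun ρ => greedySel (Qpi ρ))^[Fintype.card (S → A)] π = phat := by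
  classical
  set g : (S → A) → (S → A) := fun ρ => greedySel (Qpi ρ) with hgdef
  have hgmax : ∀ ρ : S → A, ∀ s a, Qpi ρ s a ≤ Qpi ρ s (g ρ s) := by
    intro ρ s a
    have h : g ρ s = sel (Qpi ρ s) := greedySel_eq_sel _ s
    rw [h]
    exact sel_isMax (Qpi ρ s) a
  have himpV : ∀ ρ : S → A, ∀ s, Qpi ρ s (ρ s) ≤ Qpi (g ρ) s (g ρ s) := fun ρ =>
    value_improve hγ0 hγ1 hPnn hProw hbell ρ (g ρ) (fun s => hgmax ρ s (ρ s))
  have hQeq : ∀ ρ σ : S → A, (∀ s, Qpi ρ s (ρ s) = Qpi σ s (σ s)) → Qpi ρ = Qpi σ := by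
    intro ρ σ h
    funext s a
    rw [hbell ρ s a, hbell σ s a]
    have : ∑ s', P s a s' * Qpi ρ s' (ρ s') = ∑ s', P s a s' * Qpi σ s' (σ s') :=
      Finset.sum_congr rfl fun s' _ => by rw [h s']
    rw [this]
  have hmono : ∀ ρ : S → A, ∀ s, Monotone fun n => Qpi (g^[n] ρ) s (g^[n] ρ s) := by
    intro ρ s
    apply monotone_nat_of_le_succ
    intro n
    have h := himpV (g^[n] ρ) s
    rwa [← Function.iterate_succ_apply' g n ρ] at h
  have hfixuniq : ∀ ρ σ : S → A, g ρ = ρ → g σ = σ → ρ = σ := by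
    intro ρ σ hρ hσ
    have hdomρ : ∀ s a, Qpi ρ s a ≤ Qpi ρ s (ρ s) := by
      intro s a
      have := hgmax ρ s a
      rwa [hρ] at this
    have hdomσ : ∀ s a, Qpi σ s a ≤ Qpi σ s (σ s) := by
      intro s a
      have := hgmax σ s a
      rwa [hσ] at this
    have h1 := value_dominant hγ0 hγ1 hPnn hProw hbell ρ hdomρ σ
    have h2 := value_dominant hγ0 hγ1 hPnn hProw hbell σ hdomσ ρ
    have hV : ∀ s, Qpi ρ s (ρ s) = Qpi σ s (σ s) := fun s =>
      le_antisymm (h2 s) (h1 s)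
    have hQ : Qpi ρ = Qpi σ := hQeq ρ σ hV
    calc ρ = g ρ := hρ.symm
      _ = greedySel (Qpi σ) := by rw [hgdef]; simp only; rw [hQ]
      _ = g σ := rfl
      _ = σ := hσ
  have key : ∀ ρ : S → A, ∀ i j : ℕ, i < j → g^[i] ρ = g^[j] ρ →
      g (g^[i + 1] ρ) = g^[i + 1] ρ := by
    intro ρ i j hlt heqf
    have hij1 : i + 1 ≤ j := hlt
    have hVeq : ∀ s, Qpi (g^[i] ρ) s (g^[i] ρ s)
        = Qpi (g^[i + 1] ρ) s (g^[i + 1] ρ s) := by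
      intro s
      refine le_antisymm (hmono ρ s (Nat.le_succ _)) ?_
      have h1 : Qpi (g^[i + 1] ρ) s (g^[i + 1] ρ s)
          ≤ Qpi (g^[j] ρ) s (g^[j] ρ s) := hmono ρ s hij1
      rwa [← heqf] at h1
    have hQ : Qpi (g^[i] ρ) = Qpi (g^[i + 1] ρ) := hQeq _ _ hVeq
    calc g (g^[i + 1] ρ) = greedySel (Qpi (g^[i + 1] ρ)) := rfl
      _ = greedySel (Qpi (g^[i] ρ)) := by rw [hQ]
      _ = g (g^[i] ρ) := rfl
      _ = g^[i + 1] ρ := (Function.iterate_succ_apply' g _ ρ).symm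
  have claim1 : ∀ ρ : S → A, ∃ n, n ≤ Fintype.card (S → A) ∧ g (g^[n] ρ) = g^[n] ρ := by
    intro ρ
    have hcard : Fintype.card (S → A) < Fintype.card (Fin (Fintype.card (S → A) + 1)) := by
      simp
    obtain ⟨i, j, hij, heqf⟩ := Fintype.exists_ne_map_eq_of_card_lt
      (fun i : Fin (Fintype.card (S → A) + 1) => g^[(i : ℕ)] ρ) hcard
    have hjle : (j : ℕ) ≤ Fintype.card (S → A) := Nat.lt_succ_iff.mp j.isLt
    have hile : (i : ℕ) ≤ Fintype.card (S → A) := Nat.lt_succ_iff.mp i.isLt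
    rcases lt_or_gt_of_ne hij with hlt | hgt
    · exact ⟨(i : ℕ) + 1, by omega, key ρ i j (by exact_mod_cast hlt) heqf⟩
    · exact ⟨(j : ℕ) + 1, by omega, key ρ j i (by exact_mod_cast hgt) heqf.symm⟩
  obtain ⟨n0, hn0le, hfix0⟩ := claim1 (Classical.arbitrary (S → A))
  set phat : S → A := g^[n0] (Classical.arbitrary (S → A)) with hphat
  refine ⟨phat, fun π => ?_⟩
  obtain ⟨n, hnle, hfixn⟩ := claim1 π
  have hπphat : g^[n] π = phat := hfixuniq _ _ hfixn hfix0
  have hfixphat : g phat = phat := by rw [← hπphat]; exact hfixn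
  have hrep : Fintype.card (S → A) = (Fintype.card (S → A) - n) + n := by omega
  show g^[Fintype.card (S → A)] π = phat
  rw [hrep, Function.iterate_add_apply, hπphat]
  exact Function.iterate_fixed hfixphat _

end mdp

/-- The optimistic-policy-iteration kernel on deterministic policies:
`K π π'` is the probability that `π'` is the greedy policy for the (mutually
independent) sampled returns `G^π`. -/
noncomputable def opiKernel {S A : Type*} [Fintype S] [Fintype A] [Nonempty A] [LinearOrder A]
    (ret : (S → A) → S → A → Measure ℝ) (π π' : S → A) : ENNReal :=
  (Measure.pi fun s => Measure.pi fun a => ret π s a) {g : S → A → ℝ | greedySel g = π'}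

/-- One step of the induced Markov chain on distributions over policies:
`(μ K)(π') = Σ_π μ(π) K(π,π')`. -/
noncomputable def opiStep {S A : Type*} [Fintype S] [DecidableEq S]
    [Fintype A] [Nonempty A] [LinearOrder A]
    (ret : (S → A) → S → A → Measure ℝ) (μ : (S → A) → ℝ) : (S → A) → ℝ :=
  fun π' => ∑ π : S → A, μ π * (opiKernel ret π π').toReal

section kernel
set_option linter.unusedSectionVars false
variable {S A : Type*} [Fintype S] [DecidableEq S] [Fintype A] [Nonempty A] [LinearOrder A]

lemma greedy_set_eq (π' : S → A) :
    {g : S → A → ℝ | greedySel g = π'} =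
      Set.univ.pi (fun s => {h : A → ℝ | sel h = π' s}) := by
  ext g
  simp only [Set.mem_setOf_eq, Set.mem_univ_pi, funext_iff]
  constructor
  · intro hg s
    rw [← greedySel_eq_sel]; exact hg s
  · intro hg s
    rw [greedySel_eq_sel]; exact hg s

lemma measurableSet_greedy (π' : S → A) :
    MeasurableSet {g : S → A → ℝ | greedySel g = π'} := by
  rw [greedy_set_eq]
  exact MeasurableSet.univ_pi fun s => measurableSet_sel_eq _

lemma opiKernel_ne_zero (ret : (S → A) → S → A → Measure ℝ) (π : S → A)
    (hprob : ∀ s a, IsProbabilityMeasure (ret π s a)) {C : ℝ}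
    (hsupp : ∀ s a, ret π s a (Set.Icc 0 C)ᶜ = 0)
    (Qm : S → A → ℝ) (hmean : ∀ s a, (∫ x, x ∂ret π s a) = Qm s a) :
    opiKernel ret π (greedySel Qm) ≠ 0 := by
  haveI : ∀ s a, IsProbabilityMeasure (ret π s a) := hprob
  rw [opiKernel, greedy_set_eq, Measure.pi_pi, Finset.prod_ne_zero_iff]
  intro s _
  rw [greedySel_eq_sel Qm s]
  exact pi_sel_mean_ne_zero (fun a => ret π s a) (hprob s) (hsupp s) (Qm s) (hmean s)

lemma opiKernel_ne_top (ret : (S → A) → S → A → Measure ℝ) (π π' : S → A)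
    (hprob : ∀ s a, IsProbabilityMeasure (ret π s a)) :
    opiKernel ret π π' ≠ ⊤ := by
  haveI : ∀ s a, IsProbabilityMeasure (ret π s a) := hprob
  exact measure_ne_top _ _

lemma opiKernel_rowsum (ret : (S → A) → S → A → Measure ℝ) (π : S → A)
    (hprob : ∀ s a, IsProbabilityMeasure (ret π s a)) :
    ∑ π' : S → A, (opiKernel ret π π').toReal = 1 := by
  classical
  haveI : ∀ s a, IsProbabilityMeasure (ret π s a) := hprob
  set μ : Measure (S → A → ℝ) := Measure.pi fun s => Measure.pi fun a => ret π s a with hμ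
  haveI hμP : IsProbabilityMeasure μ := by rw [hμ]; infer_instance
  have hμk : ∀ π' : S → A, opiKernel ret π π' = μ {g : S → A → ℝ | greedySel g = π'} :=
    fun _ => rfl
  have hdisj : ((Finset.univ : Finset (S → A)) : Set (S → A)).PairwiseDisjoint
      (fun π' : S → A => {g : S → A → ℝ | greedySel g = π'}) := by
    intro x _ y _ hxy
    refine Set.disjoint_left.mpr ?_
    intro g hgx hgy
    exact hxy (by rw [← hgx, ← hgy])
  have hbiu := measure_biUnion_finset (μ := μ) hdisj
    (fun π' _ => measurableSet_greedy (S := S) (A := A) π')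
  have huniv : ⋃ π' ∈ (Finset.univ : Finset (S → A)),
      {g : S → A → ℝ | greedySel g = π'} = Set.univ := by
    ext g
    simp only [Set.mem_iUnion, Set.mem_univ, iff_true]
    exact ⟨greedySel g, Finset.mem_univ _, rfl⟩
  rw [huniv, measure_univ] at hbiu
  have hsum : ∑ π' : S → A, opiKernel ret π π' = 1 := by
    simp only [hμk]
    exact hbiu.symm
  rw [← ENNReal.toReal_sum (fun π' _ => opiKernel_ne_top ret π π' hprob), hsum,
    ENNReal.toReal_one]
end kernel

theorem opi_alpha_one_converges_to_unique_stationary_distribution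
    {S A : Type*} [Fintype S] [DecidableEq S] [Nonempty S]
    [Fintype A] [Nonempty A] [LinearOrder A]
    (γ Rmax : ℝ) (hγ0 : 0 ≤ γ) (hγ1 : γ < 1) (hRmax : 0 ≤ Rmax)
    -- transition probabilities and mean rewards of the finite MDP
    (P : S → A → S → ℝ) (hPnn : ∀ s a s', 0 ≤ P s a s') (hProw : ∀ s a, ∑ s', P s a s' = 1)
    (rbar : S → A → ℝ) (hrbar : ∀ s a, rbar s a ∈ Set.Icc 0 Rmax)
    -- the action-value functions Q^π, satisfying the Bellman equations
    (Qpi : (S → A) → S → A → ℝ)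
    (hbell : ∀ π s a, Qpi π s a = rbar s a + γ * ∑ s', P s a s' * Qpi π s' (π s'))
    -- the return distributions G^π(s,a): mean Q^π(s,a), bounded support,
    -- mutually independent across state-action pairs (product measure in `opiKernel`)
    (ret : (S → A) → S → A → Measure ℝ)
    (hret : ∀ π s a, IsProbabilityMeasure (ret π s a))
    (hsupp : ∀ π s a, (ret π s a) (Set.Icc 0 (Rmax / (1 - γ)))ᶜ = 0)
    (hmean : ∀ π s a, (∫ x, x ∂ret π s a) = Qpi π s a) :
    ∃ φ : (S → A) → ℝ,
      (∀ π, 0 ≤ φ π) ∧ (∑ π : S → A, φ π = 1) ∧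
      opiStep ret φ = φ ∧
      (∀ φ' : (S → A) → ℝ, (∀ π, 0 ≤ φ' π) → (∑ π : S → A, φ' π = 1) →
        opiStep ret φ' = φ' → φ' = φ) ∧
      (∀ μ₀ : (S → A) → ℝ, (∀ π, 0 ≤ μ₀ π) → (∑ π : S → A, μ₀ π = 1) →
        Tendsto (fun n => (opiStep ret)^[n] μ₀) atTop (nhds φ)) := by
  classical
  obtain ⟨phat, hphat⟩ := greedy_fixed_reach (γ := γ) (P := P) (rbar := rbar)
    (Qpi := Qpi) hγ0 hγ1 hPnn hProw hbell
  set K : (S → A) → (S → A) → ℝ := fun π π' => (opiKernel ret π π').toReal with hK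
  have hK0 : ∀ p q : S → A, 0 ≤ K p q := fun p q => ENNReal.toReal_nonneg
  have hK1 : ∀ p : S → A, ∑ q : S → A, K p q = 1 := fun p =>
    opiKernel_rowsum ret p (fun s a => hret p s a)
  have hKg : ∀ p : S → A, 0 < K p (greedySel (Qpi p)) := by
    intro p
    have hne := opiKernel_ne_zero ret p (fun s a => hret p s a)
      (fun s a => hsupp p s a) (Qpi p) (fun s a => hmean p s a)
    exact ENNReal.toReal_pos hne (opiKernel_ne_top ret p _ (fun s a => hret p s a))
  obtain ⟨φ, h0, h1, hfix, huniq, hconv⟩ := doeblin_main K hK0 hK1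
    (fun ρ => greedySel (Qpi ρ)) hKg (Fintype.card (S → A)) phat hphat
  have hms : opiStep ret = mstep K := rfl
  refine ⟨φ, h0, h1, ?_, ?_, ?_⟩
  · rw [hms]; exact hfix
  · intro φ' ha hb hc
    exact huniq φ' ha hb (by rw [← hms]; exact hc)
  · intro μ0 ha hb
    rw [hms]
    exact hconv μ0 ha hb
end

section
/- (Probabilistic policy improvement.) Let π be a deterministic policy and let π' be the greedy policy with respect to the action-value function Q^π (so π'(s) ∈ argmax_a Q^π(s,a) for each s, with the fixed tie-breaking rule). Then K(π, π') > 0, i.e. with positive probability the greedy policy computed from the random sampled returns G^π is exactly π'. -/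
/-!
STATEMENT 7 (Probabilistic policy improvement): if π' is the greedy policy with
respect to Q^π (under the fixed tie-breaking rule), then K(π, π') > 0: with
positive probability the greedy policy computed from the random sampled returns
G^π is exactly π'.
-/

open MeasureTheory

lemma greedySel_isMax {S A : Type*} [Fintype A] [Nonempty A] [LinearOrder A]
    (Q : S → A → ℝ) (s : S) (a' : A) : Q s a' ≤ Q s (greedySel Q s) := by
  classical
  unfold greedySel
  have h := Finset.min'_mem (Finset.univ.filter fun a => ∀ a', Q s a' ≤ Q s a)
    (by
      obtain ⟨a, -, ha⟩ := Finset.exists_max_image Finset.univ (fun a => Q s a)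
        ⟨Classical.arbitrary A, Finset.mem_univ _⟩
      exact ⟨a, Finset.mem_filter.mpr
        ⟨Finset.mem_univ _, fun a' => ha a' (Finset.mem_univ _)⟩⟩)
  exact (Finset.mem_filter.mp h).2 a'

lemma greedySel_le {S A : Type*} [Fintype A] [Nonempty A] [LinearOrder A]
    (Q : S → A → ℝ) (s : S) (a : A) (h : ∀ a', Q s a' ≤ Q s a) : greedySel Q s ≤ a := by
  classical
  unfold greedySel
  exact Finset.min'_le _ _ (Finset.mem_filter.mpr ⟨Finset.mem_univ _, h⟩)

/-- Any integrable probability measure with bounded support gives positive mass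
to the set of points at least its mean. -/
lemma pos_meas_Ici (μ : Measure ℝ) [IsProbabilityMeasure μ] {B : ℝ}
    (hs : μ (Set.Icc 0 B)ᶜ = 0) : 0 < μ (Set.Ici (∫ x, x ∂μ)) := by
  have hae : ∀ᵐ x ∂μ, x ∈ Set.Icc 0 B := by
    rw [ae_iff]; exact hs
  have hint : Integrable (fun x : ℝ => x) μ := by
    refine (integrable_const B).mono' aestronglyMeasurable_id ?_
    filter_upwards [hae] with x hx
    rw [Real.norm_eq_abs, abs_of_nonneg hx.1]; exact hx.2
  set m := ∫ x, x ∂μ with hm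
  by_contra h
  have h0 : μ (Set.Ici m) = 0 := by simpa using h
  have haelt : ∀ᵐ x ∂μ, x < m := by
    rw [ae_iff]; simpa [not_lt, Set.Ici] using h0
  have hfi : Integrable (fun x => m - x) μ := (integrable_const m).sub hint
  have hnn : 0 ≤ᵐ[μ] fun x => m - x := haelt.mono fun x hx => by simp [le_of_lt hx]
  have hlt : 0 < μ {x | x < m} := by
    have hu : (Set.univ : Set ℝ) ⊆ {x | x < m} ∪ Set.Ici m := by
      intro x _; rcases lt_or_ge x m with h' | h'
      · exact Or.inl h'
      · exact Or.inr h'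
    by_contra h2
    have h2' : μ {x | x < m} = 0 := by simpa using h2
    have h1 : (1 : ENNReal) ≤ μ ({x | x < m} ∪ Set.Ici m) := by
      rw [show (1 : ENNReal) = μ Set.univ from (measure_univ).symm]
      exact measure_mono hu
    have := h1.trans (measure_union_le _ _)
    simp [h0, h2'] at this
  have hsupport : 0 < μ (Function.support fun x => m - x) := by
    refine lt_of_lt_of_le hlt (measure_mono ?_)
    intro x hx
    simp only [Function.mem_support]
    exact sub_ne_zero.mpr (ne_of_gt hx)
  have hpos := (integral_pos_iff_support_of_nonneg_ae hnn hfi).mpr hsupport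
  rw [integral_sub (integrable_const m) hint, integral_const, probReal_univ] at hpos
  simp [← hm] at hpos

/-- Any integrable probability measure with bounded support gives positive mass
to the set of points at most its mean. -/
lemma pos_meas_Iic (μ : Measure ℝ) [IsProbabilityMeasure μ] {B : ℝ}
    (hs : μ (Set.Icc 0 B)ᶜ = 0) : 0 < μ (Set.Iic (∫ x, x ∂μ)) := by
  have hae : ∀ᵐ x ∂μ, x ∈ Set.Icc 0 B := by
    rw [ae_iff]; exact hs
  have hint : Integrable (fun x : ℝ => x) μ := by
    refine (integrable_const B).mono' aestronglyMeasurable_id ?_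
    filter_upwards [hae] with x hx
    rw [Real.norm_eq_abs, abs_of_nonneg hx.1]; exact hx.2
  set m := ∫ x, x ∂μ with hm
  by_contra h
  have h0 : μ (Set.Iic m) = 0 := by simpa using h
  have haelt : ∀ᵐ x ∂μ, m < x := by
    rw [ae_iff]; simpa [not_lt, Set.Iic] using h0
  have hfi : Integrable (fun x => x - m) μ := hint.sub (integrable_const m)
  have hnn : 0 ≤ᵐ[μ] fun x => x - m := haelt.mono fun x hx => by simp [le_of_lt hx]
  have hlt : 0 < μ {x | m < x} := by
    have hu : (Set.univ : Set ℝ) ⊆ {x | m < x} ∪ Set.Iic m := by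
      intro x _; rcases lt_or_ge m x with h' | h'
      · exact Or.inl h'
      · exact Or.inr h'
    by_contra h2
    have h2' : μ {x | m < x} = 0 := by simpa using h2
    have h1 : (1 : ENNReal) ≤ μ ({x | m < x} ∪ Set.Iic m) := by
      rw [show (1 : ENNReal) = μ Set.univ from (measure_univ).symm]
      exact measure_mono hu
    have := h1.trans (measure_union_le _ _)
    simp [h0, h2'] at this
  have hsupport : 0 < μ (Function.support fun x => x - m) := by
    refine lt_of_lt_of_le hlt (measure_mono ?_)
    intro x hx
    simp only [Function.mem_support]
    exact sub_ne_zero.mpr (ne_of_gt hx)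
  have hpos := (integral_pos_iff_support_of_nonneg_ae hnn hfi).mpr hsupport
  rw [integral_sub hint (integrable_const m), integral_const, probReal_univ] at hpos
  simp [← hm] at hpos

theorem probabilistic_policy_improvement
    {S A : Type*} [Fintype S] [Nonempty S] [Fintype A] [Nonempty A] [LinearOrder A]
    (γ Rmax : ℝ) (hγ0 : 0 ≤ γ) (hγ1 : γ < 1) (hRmax : 0 ≤ Rmax)
    -- transition probabilities and mean rewards of the finite MDP
    (P : S → A → S → ℝ) (hPnn : ∀ s a s', 0 ≤ P s a s') (hProw : ∀ s a, ∑ s', P s a s' = 1)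
    (rbar : S → A → ℝ) (hrbar : ∀ s a, rbar s a ∈ Set.Icc 0 Rmax)
    -- the action-value functions Q^π, satisfying the Bellman equations
    (Qpi : (S → A) → S → A → ℝ)
    (hbell : ∀ π s a, Qpi π s a = rbar s a + γ * ∑ s', P s a s' * Qpi π s' (π s'))
    -- the return distributions G^π(s,a): mean Q^π(s,a), bounded support,
    -- mutually independent across state-action pairs (product measure below)
    (ret : (S → A) → S → A → Measure ℝ)
    (hret : ∀ π s a, IsProbabilityMeasure (ret π s a))
    (hsupp : ∀ π s a, (ret π s a) (Set.Icc 0 (Rmax / (1 - γ)))ᶜ = 0)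
    (hmean : ∀ π s a, (∫ x, x ∂ret π s a) = Qpi π s a)
    (π : S → A) :
    0 < (Measure.pi fun s => Measure.pi fun a => ret π s a)
          {g : S → A → ℝ | greedySel g = greedySel (Qpi π)} := by
  classical
  haveI I1 : ∀ s a, IsProbabilityMeasure (ret π s a) := hret π
  set Q : S → A → ℝ := Qpi π with hQ
  set E : S → A → Set ℝ := fun s a =>
    if a = greedySel Q s then Set.Ici (Q s a) else Set.Iic (Q s a) with hE
  -- each component set has positive measure
  have hpos : ∀ s a, 0 < ret π s a (E s a) := by
    intro s a
    by_cases h : a = greedySel Q s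
    · simp only [hE, if_pos h]
      rw [hQ, ← hmean π s a]
      exact pos_meas_Ici _ (hsupp π s a)
    · simp only [hE, if_neg h]
      rw [hQ, ← hmean π s a]
      exact pos_meas_Iic _ (hsupp π s a)
  -- the product set is contained in the target event
  have hsub : (Set.univ.pi fun s => Set.univ.pi fun a => E s a) ⊆
      {g : S → A → ℝ | greedySel g = greedySel Q} := by
    intro g hg
    have hg' : ∀ s a, g s a ∈ E s a := fun s a =>
      (hg s (Set.mem_univ s)) a (Set.mem_univ a)
    have key : ∀ s, greedySel g s = greedySel Q s := by
      intro s
      set a₀ := greedySel Q s with ha₀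
      have hga : Q s a₀ ≤ g s a₀ := by
        have := hg' s a₀; simpa [hE, if_pos ha₀] using this
      have hgb : ∀ a, a ≠ a₀ → g s a ≤ Q s a := by
        intro a h; have := hg' s a; simpa [hE, if_neg (show a ≠ greedySel Q s by rw [← ha₀]; exact h)] using this
      -- a₀ is a maximizer of g s
      have hmaxg : ∀ a, g s a ≤ g s a₀ := by
        intro a
        by_cases h : a = a₀
        · subst h; exact le_refl _
        · exact (hgb a h).trans ((greedySel_isMax Q s a).trans hga)
      -- any maximizer of g s is ≥ a₀
      have hge : ∀ a, (∀ a', g s a' ≤ g s a) → a₀ ≤ a := by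
        intro a hmax
        by_contra hcon
        push_neg at hcon
        have hne : a ≠ a₀ := ne_of_lt hcon
        have h1 : g s a ≤ Q s a := hgb a hne
        by_cases hq : Q s a = Q s a₀
        · have : a₀ ≤ a := greedySel_le Q s a (fun a' => (greedySel_isMax Q s a').trans hq.ge)
          exact absurd this (not_le_of_gt hcon)
        · have h2 : Q s a < Q s a₀ := lt_of_le_of_ne (greedySel_isMax Q s a) hq
          exact absurd (hmax a₀) (not_le_of_gt (lt_of_le_of_lt h1 (lt_of_lt_of_le h2 hga)))
      refine le_antisymm (greedySel_le g s a₀ hmaxg) (hge (greedySel g s) (greedySel_isMax g s))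
    exact funext key
  refine lt_of_lt_of_le ?_ (measure_mono hsub)
  rw [Measure.pi_pi]
  rw [Finset.prod_congr rfl (fun s _ => Measure.pi_pi (fun a => ret π s a) (E s))]
  refine CanonicallyOrderedAdd.prod_pos.mpr fun s _ =>
    CanonicallyOrderedAdd.prod_pos.mpr fun a _ => hpos s a
end

section
/- The optimal policy π* is an aperiodic state of the optimistic-policy-iteration chain on policies: K(π*, π*) > 0, i.e. with positive probability the greedy policy with respect to the sampled returns G^{π*} is again π*. -/
/-!
STATEMENT 8: The optimal policy π* is an aperiodic state of the
optimistic-policy-iteration chain on policies: K(π*, π*) > 0, i.e. with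
positive probability the greedy policy with respect to the sampled returns
G^{π*} is again π*.
-/

open MeasureTheory

section Aux

open MeasureTheory

private lemma aux_pos_Ici (μ : Measure ℝ) [IsProbabilityMeasure μ] (B : ℝ)
    (hs : μ (Set.Icc 0 B)ᶜ = 0) : 0 < μ (Set.Ici (∫ x, x ∂μ)) := by
  set m : ℝ := ∫ x, x ∂μ with hm
  have hb : ∀ᵐ x ∂μ, x ∈ Set.Icc 0 B := by
    rw [ae_iff]; simpa [Set.compl_def] using hs
  have hint : Integrable (fun x : ℝ => x) μ := by
    refine (integrable_const (max B 0)).mono' measurable_id.aestronglyMeasurable ?_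
    filter_upwards [hb] with x hx
    rw [Real.norm_eq_abs, abs_of_nonneg hx.1]
    exact le_trans hx.2 (le_max_left _ _)
  by_contra h
  have h0 : μ (Set.Ici m) = 0 := le_zero_iff.mp (not_lt.mp h)
  have hlt : ∀ᵐ x ∂μ, x < m := by
    rw [ae_iff]; simpa [not_lt, Set.Ici, Set.compl_def] using h0
  have hle : 0 ≤ᵐ[μ] fun x => m - x := hlt.mono fun x hx => by simp; linarith
  have hint2 : Integrable (fun x : ℝ => m - x) μ := (integrable_const m).sub hint
  have hI : ∫ x, (m - x) ∂μ = 0 := by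
    rw [integral_sub (integrable_const m) hint, integral_const]
    simp [hm.symm]
  have hz : (fun x => m - x) =ᵐ[μ] 0 := (integral_eq_zero_iff_of_nonneg_ae hle hint2).mp hI
  haveI : (ae μ).NeBot := ae_neBot.mpr (IsProbabilityMeasure.ne_zero μ)
  obtain ⟨x, hx1, hx2⟩ := (hz.and hlt).exists
  simp only [Pi.zero_apply] at hx1
  linarith

private lemma aux_pos_Iic (μ : Measure ℝ) [IsProbabilityMeasure μ] (B : ℝ)
    (hs : μ (Set.Icc 0 B)ᶜ = 0) : 0 < μ (Set.Iic (∫ x, x ∂μ)) := by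
  set m : ℝ := ∫ x, x ∂μ with hm
  have hb : ∀ᵐ x ∂μ, x ∈ Set.Icc 0 B := by
    rw [ae_iff]; simpa [Set.compl_def] using hs
  have hint : Integrable (fun x : ℝ => x) μ := by
    refine (integrable_const (max B 0)).mono' measurable_id.aestronglyMeasurable ?_
    filter_upwards [hb] with x hx
    rw [Real.norm_eq_abs, abs_of_nonneg hx.1]
    exact le_trans hx.2 (le_max_left _ _)
  by_contra h
  have h0 : μ (Set.Iic m) = 0 := le_zero_iff.mp (not_lt.mp h)
  have hlt : ∀ᵐ x ∂μ, m < x := by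
    rw [ae_iff]; simpa [not_lt, Set.Iic, Set.compl_def] using h0
  have hle : 0 ≤ᵐ[μ] fun x => x - m := hlt.mono fun x hx => by simp; linarith
  have hint2 : Integrable (fun x : ℝ => x - m) μ := hint.sub (integrable_const m)
  have hI : ∫ x, (x - m) ∂μ = 0 := by
    rw [integral_sub hint (integrable_const m), integral_const]
    simp [hm.symm]
  have hz : (fun x => x - m) =ᵐ[μ] 0 := (integral_eq_zero_iff_of_nonneg_ae hle hint2).mp hI
  haveI : (ae μ).NeBot := ae_neBot.mpr (IsProbabilityMeasure.ne_zero μ)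
  obtain ⟨x, hx1, hx2⟩ := (hz.and hlt).exists
  simp only [Pi.zero_apply] at hx1
  linarith

end Aux

theorem optimal_policy_is_aperiodic
    {S A : Type*} [Fintype S] [Nonempty S] [Fintype A] [Nonempty A] [LinearOrder A]
    (γ Rmax : ℝ) (hγ0 : 0 ≤ γ) (hγ1 : γ < 1) (hRmax : 0 ≤ Rmax)
    -- transition probabilities and mean rewards of the finite MDP
    (P : S → A → S → ℝ) (hPnn : ∀ s a s', 0 ≤ P s a s') (hProw : ∀ s a, ∑ s', P s a s' = 1)
    (rbar : S → A → ℝ) (hrbar : ∀ s a, rbar s a ∈ Set.Icc 0 Rmax)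
    -- the action-value functions Q^π, satisfying the Bellman equations
    (Qpi : (S → A) → S → A → ℝ)
    (hbell : ∀ π s a, Qpi π s a = rbar s a + γ * ∑ s', P s a s' * Qpi π s' (π s'))
    -- the return distributions G^π(s,a): mean Q^π(s,a), bounded support,
    -- mutually independent across state-action pairs (product measure below)
    (ret : (S → A) → S → A → Measure ℝ)
    (hret : ∀ π s a, IsProbabilityMeasure (ret π s a))
    (hsupp : ∀ π s a, (ret π s a) (Set.Icc 0 (Rmax / (1 - γ)))ᶜ = 0)
    (hmean : ∀ π s a, (∫ x, x ∂ret π s a) = Qpi π s a)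
    -- the optimal policy π*: it dominates every policy and is greedy with
    -- respect to its own action-value function Q* = Q^{π*}
    (πstar : S → A)
    (hopt : ∀ π s a, Qpi π s a ≤ Qpi πstar s a)
    (hgreedystar : greedySel (Qpi πstar) = πstar) :
    0 < (Measure.pi fun s => Measure.pi fun a => ret πstar s a)
          {g : S → A → ℝ | greedySel g = πstar} := by
  classical
  set E : S → A → Set ℝ := fun s a =>
    if a = πstar s then Set.Ici (Qpi πstar s a) else Set.Iic (Qpi πstar s a) with hE
  haveI : ∀ (s : S) (a : A), IsProbabilityMeasure (ret πstar s a) := hret πstar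
  have hEpos : ∀ s a, 0 < ret πstar s a (E s a) := by
    intro s a
    by_cases h : a = πstar s
    · simp only [hE, if_pos h, ← hmean πstar s a]
      exact aux_pos_Ici _ _ (hsupp πstar s a)
    · simp only [hE, if_neg h, ← hmean πstar s a]
      exact aux_pos_Iic _ _ (hsupp πstar s a)
  -- the key inclusion
  have hQmax : ∀ s a', Qpi πstar s a' ≤ Qpi πstar s (πstar s) := by
    intro s a'
    have h1 : greedySel (Qpi πstar) s = πstar s := congrFun hgreedystar s
    simp only [greedySel] at h1
    have := Finset.min'_mem
      (Finset.univ.filter fun a => ∀ a', Qpi πstar s a' ≤ Qpi πstar s a) (by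
        obtain ⟨a, -, ha⟩ := Finset.exists_max_image Finset.univ (fun a => Qpi πstar s a)
          ⟨Classical.arbitrary A, Finset.mem_univ _⟩
        exact ⟨a, Finset.mem_filter.mpr
          ⟨Finset.mem_univ _, fun a' => ha a' (Finset.mem_univ _)⟩⟩)
    rw [h1] at this
    exact (Finset.mem_filter.mp this).2 a'
  have hsub : (Set.univ.pi fun s => Set.univ.pi fun a => E s a) ⊆
      {g : S → A → ℝ | greedySel g = πstar} := by
    intro g hg
    have hg' : ∀ s a, g s a ∈ E s a := fun s a =>
      hg s (Set.mem_univ s) a (Set.mem_univ a)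
    have hgge : ∀ s, Qpi πstar s (πstar s) ≤ g s (πstar s) := by
      intro s
      have := hg' s (πstar s)
      simpa [hE] using this
    have hgle : ∀ s a, a ≠ πstar s → g s a ≤ Qpi πstar s a := by
      intro s a h
      have := hg' s a
      simpa [hE, if_neg h] using this
    show greedySel g = πstar
    funext s
    have hgmax : ∀ a', g s a' ≤ g s (πstar s) := by
      intro a'
      by_cases h : a' = πstar s
      · exact le_of_eq (by rw [h])
      · exact le_trans (hgle s a' h) (le_trans (hQmax s a') (hgge s))
    set Fg := Finset.univ.filter fun a => ∀ a', g s a' ≤ g s a with hFg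
    set FQ := Finset.univ.filter fun a => ∀ a', Qpi πstar s a' ≤ Qpi πstar s a with hFQ
    have hstar_g : πstar s ∈ Fg := Finset.mem_filter.mpr ⟨Finset.mem_univ _, hgmax⟩
    have hsubF : Fg ⊆ FQ := by
      intro a ha
      have ha' := (Finset.mem_filter.mp ha).2
      by_cases h : a = πstar s
      · exact Finset.mem_filter.mpr ⟨Finset.mem_univ _, h ▸ hQmax s⟩
      · have h1 : Qpi πstar s (πstar s) ≤ Qpi πstar s a :=
          le_trans (hgge s) (le_trans (ha' (πstar s)) (hgle s a h))
        exact Finset.mem_filter.mpr ⟨Finset.mem_univ _,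
          fun a' => le_trans (hQmax s a') h1⟩
    have hQmin : FQ.min' (by exact ⟨πstar s, Finset.mem_filter.mpr ⟨Finset.mem_univ _, hQmax s⟩⟩)
        = πstar s := by
      have h1 : greedySel (Qpi πstar) s = πstar s := congrFun hgreedystar s
      simpa only [greedySel] using h1
    show greedySel g s = πstar s
    simp only [greedySel]
    refine le_antisymm (Finset.min'_le _ _ hstar_g) ?_
    calc πstar s = FQ.min' _ := hQmin.symm
      _ ≤ Fg.min' _ := Finset.min'_le _ _ (hsubF (Finset.min'_mem _ _))
  refine lt_of_lt_of_le ?_ (measure_mono hsub)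
  rw [Measure.pi_pi]
  have : ∀ s : S, (Measure.pi fun a => ret πstar s a) (Set.univ.pi fun a => E s a)
      = ∏ a, ret πstar s a (E s a) := fun s => Measure.pi_pi _ _
  simp only [this]
  rw [CanonicallyOrderedAdd.prod_pos]
  intro s _
  rw [CanonicallyOrderedAdd.prod_pos]
  exact fun a _ => hEpos s a
end

section
/- Let X₁, …, X_n be mutually independent real-valued random variables bounded in [a,b], with F_i the cumulative distribution function of X_i for i = 2, …, n. If E[F_i(X₁)] > 0 for every i = 2, …, n, then E[F₂(X₁) F₃(X₁) ⋯ F_n(X₁)] > 0; equivalently, if P{X₁ ≥ X_i} > 0 for every i individually, then P{X₁ ≥ X_i for all i = 2, …, n} > 0. -/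
/-!
STATEMENT 17: For mutually independent real random variables X₁, …, X_n
bounded in [a,b] with F_i the CDF of X_i: if E[F_i(X₁)] > 0 for all
i = 2, …, n then E[F₂(X₁) ⋯ F_n(X₁)] > 0; equivalently, if P{X₁ ≥ X_i} > 0
for every i individually, then P{X₁ ≥ X_i, ∀ i = 2, …, n} > 0.
(Indices: `X 0` plays the role of X₁.)
-/

open MeasureTheory ProbabilityTheory

private lemma chain_min' {ι α : Type*} (T : ι → Set α) (s : Finset ι) (hsn : s.Nonempty)
    (hchain : ∀ i ∈ s, ∀ j ∈ s, T i ⊆ T j ∨ T j ⊆ T i) :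
    ∃ j ∈ s, ∀ i ∈ s, T j ⊆ T i := by
  classical
  induction s using Finset.cons_induction with
  | empty => exact absurd hsn (by simp)
  | cons k s hk ih =>
    by_cases hs : s.Nonempty
    · obtain ⟨j, hj, hjmin⟩ := ih hs (fun i hi j hj =>
        hchain i (Finset.mem_cons_of_mem hi) j (Finset.mem_cons_of_mem hj))
      rcases hchain k (Finset.mem_cons_self k s) j (Finset.mem_cons_of_mem hj) with h | h
      · refine ⟨k, Finset.mem_cons_self k s, fun i hi => ?_⟩
        rcases Finset.mem_cons.1 hi with rfl | hi
        · exact subset_rfl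
        · exact h.trans (hjmin i hi)
      · refine ⟨j, Finset.mem_cons_of_mem hj, fun i hi => ?_⟩
        rcases Finset.mem_cons.1 hi with rfl | hi
        · exact h
        · exact hjmin i hi
    · rw [Finset.not_nonempty_iff_eq_empty] at hs
      subst hs
      exact ⟨k, Finset.mem_cons_self k ∅, fun i hi => by
        rcases Finset.mem_cons.1 hi with rfl | hi
        · exact subset_rfl
        · exact absurd hi (by simp)⟩

theorem product_of_cdfs_positive
    {Ωs : Type*} [MeasurableSpace Ωs] (μ : Measure Ωs) [IsProbabilityMeasure μ]
    {n : ℕ} [NeZero n]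
    (X : Fin n → Ωs → ℝ)
    (hmeas : ∀ i, Measurable (X i))
    (hindep : iIndepFun X μ)
    (a b : ℝ) (hbdd : ∀ i ω, X i ω ∈ Set.Icc a b)
    (F : Fin n → ℝ → ℝ) (hF : ∀ i x, F i x = (μ {ω | X i ω ≤ x}).toReal) :
    ((∀ i : Fin n, i ≠ 0 → 0 < ∫ ω, F i (X 0 ω) ∂μ) →
      0 < ∫ ω, ∏ i ∈ Finset.univ.filter (fun i : Fin n => i ≠ 0), F i (X 0 ω) ∂μ)
    ∧ ((∀ i : Fin n, i ≠ 0 → 0 < μ {ω | X i ω ≤ X 0 ω}) →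
      0 < μ {ω | ∀ i, i ≠ 0 → X i ω ≤ X 0 ω}) := by
  classical
  set s : Finset (Fin n) := Finset.univ.filter (fun i : Fin n => i ≠ 0) with hs
  have hmem : ∀ i : Fin n, i ∈ s ↔ i ≠ 0 := fun i => by simp [hs]
  have hFm : ∀ i, Monotone (F i) := by
    intro i x y hxy
    rw [hF, hF]
    exact ENNReal.toReal_mono (measure_ne_top μ _)
      (measure_mono fun ω h => le_trans h hxy)
  have hFmeas : ∀ i, Measurable (F i) := fun i => (hFm i).measurable
  have hFnn : ∀ i x, 0 ≤ F i x := fun i x => by rw [hF]; exact ENNReal.toReal_nonneg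
  have hFle1 : ∀ i x, F i x ≤ 1 := by
    intro i x; rw [hF]
    have := ENNReal.toReal_mono (by simp) (prob_le_one (μ := μ) (s := {ω | X i ω ≤ x}))
    simpa using this
  have hint : ∀ (f : Ωs → ℝ), Measurable f → (∀ ω, 0 ≤ f ω) → (∀ ω, f ω ≤ 1) →
      Integrable f μ := by
    intro f hf h0 h1
    apply Integrable.mono' (integrable_const (1 : ℝ)) hf.aestronglyMeasurable
    filter_upwards with ω
    rw [Real.norm_eq_abs, abs_of_nonneg (h0 ω)]; exact h1 ω
  constructor
  · -- Part 1
    intro hpos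
    by_cases hsn : s.Nonempty
    · set T : Fin n → Set Ωs := fun i => X 0 ⁻¹' {x | 0 < F i x} with hT
      have hsupp : ∀ i, Function.support (fun ω => F i (X 0 ω)) = T i := by
        intro i; ext ω
        constructor
        · intro h; exact lt_of_le_of_ne (hFnn i _) (Ne.symm h)
        · intro h; exact ne_of_gt h
      have key : ∀ i ∈ s, 0 < μ (T i) := by
        intro i hi
        have h1 := hpos i ((hmem i).1 hi)
        have h2 := (integral_pos_iff_support_of_nonneg_ae
          (Filter.Eventually.of_forall fun ω => hFnn i (X 0 ω))
          (hint _ ((hFmeas i).comp (hmeas 0)) (fun ω => hFnn i _) (fun ω => hFle1 i _))).mp h1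
        rwa [hsupp i] at h2
      have hchain : ∀ i ∈ s, ∀ j ∈ s, T i ⊆ T j ∨ T j ⊆ T i := by
        intro i _ j _
        by_cases hij : ∀ x, 0 < F i x → 0 < F j x
        · exact Or.inl fun ω hω => hij _ hω
        · push_neg at hij
          obtain ⟨x, hx, hx'⟩ := hij
          refine Or.inr fun ω hω => ?_
          have hxle : x ≤ X 0 ω := by
            by_contra h
            push_neg at h
            exact (not_lt.mpr hx') (lt_of_lt_of_le hω (hFm j h.le))
          exact lt_of_lt_of_le hx (hFm i hxle)
      obtain ⟨j, hj, hjmin⟩ := chain_min' T s hsn hchain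
      rw [integral_pos_iff_support_of_nonneg_ae
        (Filter.Eventually.of_forall fun ω => Finset.prod_nonneg fun i _ => hFnn i _)
        (hint _ (Finset.measurable_prod s fun i _ => (hFmeas i).comp (hmeas 0))
          (fun ω => Finset.prod_nonneg fun i _ => hFnn i _)
          (fun ω => Finset.prod_le_one (fun i _ => hFnn i _) (fun i _ => hFle1 i _)))]
      refine lt_of_lt_of_le (key j hj) (measure_mono fun ω hω => ?_)
      exact ne_of_gt (Finset.prod_pos fun i hi => hjmin i hi hω)
    · rw [Finset.not_nonempty_iff_eq_empty] at hsn
      simp [hsn]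
  · -- Part 2
    intro hpos
    set S : Fin n → Set ℝ := fun i => {x | 0 < μ {ω | X i ω ≤ x}} with hS
    have hSne : ∀ i, (S i).Nonempty := by
      intro i
      refine ⟨b, ?_⟩
      have hb : {ω | X i ω ≤ b} = Set.univ := Set.eq_univ_of_forall fun ω => (hbdd i ω).2
      simp [hS, hb]
    have hSbdd : ∀ i, BddBelow (S i) := by
      intro i
      refine ⟨a, fun x hx => ?_⟩
      by_contra h
      push_neg at h
      have hempty : {ω | X i ω ≤ x} = ∅ :=
        Set.eq_empty_of_forall_notMem fun ω hω => absurd (le_trans (hbdd i ω).1 hω) (not_le.2 h)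
      rw [hS] at hx
      simp only [Set.mem_setOf_eq, hempty, measure_empty] at hx
      exact lt_irrefl _ hx
    set c : Fin n → ℝ := fun i => sInf (S i) with hc
    have hnull : ∀ i, μ {ω | X i ω < c i} = 0 := by
      intro i
      have hsub : {ω | X i ω < c i} ⊆ ⋃ q : {q : ℚ // (q : ℝ) < c i}, {ω | X i ω ≤ (q : ℝ)} := by
        intro ω hω
        obtain ⟨q, hq1, hq2⟩ := exists_rat_btwn (show X i ω < c i from hω)
        exact Set.mem_iUnion.2 ⟨⟨q, hq2⟩, hq1.le⟩
      refine measure_mono_null hsub (measure_iUnion_null fun q => ?_)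
      by_contra h
      have hq : ((q : ℚ) : ℝ) ∈ S i := pos_iff_ne_zero.2 h
      exact absurd (csInf_le (hSbdd i) hq) (not_le.2 q.2)
    have hX0 : ∀ i, i ≠ 0 → 0 < μ {ω | c i ≤ X 0 ω} := by
      intro i hi
      have h1 := hpos i hi
      have hsub : {ω | X i ω ≤ X 0 ω} ⊆ {ω | X i ω < c i} ∪ {ω | c i ≤ X 0 ω} := by
        intro ω hω
        by_cases h : X i ω < c i
        · exact Or.inl h
        · exact Or.inr (le_trans (not_lt.1 h) hω)
      have h2 := (measure_mono hsub).trans (measure_union_le (μ := μ) _ _)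
      rw [hnull i, zero_add] at h2
      exact lt_of_lt_of_le h1 h2
    by_cases hsn : s.Nonempty
    · obtain ⟨j, hj, hjmax⟩ := Finset.exists_mem_eq_sup' hsn c
      have hmain : ∃ t : ℝ, 0 < μ {ω | t ≤ X 0 ω} ∧ ∀ i ∈ s, 0 < μ {ω | X i ω ≤ t} := by
        by_cases hA : μ {ω | s.sup' hsn c < X 0 ω} = 0
        · refine ⟨s.sup' hsn c, ?_, ?_⟩
          · rw [hjmax]; exact hX0 j ((hmem j).1 hj)
          · intro i hi
            have h1 := hpos i ((hmem i).1 hi)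
            have hsub : {ω | X i ω ≤ X 0 ω} ⊆
                ({ω | X i ω < c i} ∪ {ω | s.sup' hsn c < X 0 ω}) ∪ {ω | X i ω ≤ s.sup' hsn c} := by
              intro ω hω
              by_cases h2 : X i ω < c i
              · exact Or.inl (Or.inl h2)
              · by_cases h3 : s.sup' hsn c < X 0 ω
                · exact Or.inl (Or.inr h3)
                · exact Or.inr (le_trans hω (not_lt.1 h3))
            have h2 := (measure_mono hsub).trans (measure_union_le (μ := μ) _ _)
            have h3 := (measure_union_le (μ := μ) {ω | X i ω < c i} {ω | s.sup' hsn c < X 0 ω})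
            rw [hnull i, hA, zero_add] at h3
            rw [le_antisymm h3 zero_le, zero_add] at h2
            exact lt_of_lt_of_le h1 h2
        · have hq : ∃ q : ℚ, s.sup' hsn c < (q : ℝ) ∧ μ {ω | (q : ℝ) ≤ X 0 ω} ≠ 0 := by
            by_contra h
            push_neg at h
            apply hA
            refine measure_mono_null (fun ω hω => ?_)
              (measure_iUnion_null fun q : {q : ℚ // s.sup' hsn c < (q : ℝ)} => h q q.2)
            obtain ⟨q, hq1, hq2⟩ := exists_rat_btwn (show s.sup' hsn c < X 0 ω from hω)
            exact Set.mem_iUnion.2 ⟨⟨q, hq1⟩, hq2.le⟩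
          obtain ⟨q, hq1, hq2⟩ := hq
          refine ⟨(q : ℝ), pos_iff_ne_zero.2 hq2, fun i hi => ?_⟩
          have hci : c i < (q : ℝ) := lt_of_le_of_lt (Finset.le_sup' c hi) hq1
          obtain ⟨x, hx, hxq⟩ := exists_lt_of_csInf_lt (hSne i) hci
          exact lt_of_lt_of_le hx (measure_mono fun ω hω => le_trans hω hxq.le)
      obtain ⟨t, ht0, hts⟩ := hmain
      set sets : Fin n → Set ℝ := fun i => if i = 0 then Set.Ici t else Set.Iic t with hsets
      have hsets0 : sets 0 = Set.Ici t := by simp [hsets]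
      have hsetsi : ∀ i : Fin n, i ≠ 0 → sets i = Set.Iic t := by
        intro i hi; simp [hsets, hi]
      have hmeasS : ∀ i ∈ Finset.univ, MeasurableSet (sets i) := by
        intro i _
        by_cases h : i = 0
        · subst h; rw [hsets0]; exact measurableSet_Ici
        · rw [hsetsi i h]; exact measurableSet_Iic
      have hprod := (iIndepFun_iff_measure_inter_preimage_eq_mul.mp hindep) Finset.univ hmeasS
      have hposprod : 0 < ∏ i ∈ Finset.univ, μ (X i ⁻¹' sets i) := by
        rw [CanonicallyOrderedAdd.prod_pos]
        intro i _
        by_cases h : i = 0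
        · subst h
          rw [hsets0]; exact ht0
        · rw [hsetsi i h]; exact hts i ((hmem i).2 h)
      rw [← hprod] at hposprod
      refine lt_of_lt_of_le hposprod (measure_mono fun ω hω => ?_)
      simp only [Set.mem_iInter] at hω
      intro i hi
      have h0 : X 0 ω ∈ sets 0 := hω 0 (Finset.mem_univ 0)
      have hii : X i ω ∈ sets i := hω i (Finset.mem_univ i)
      rw [hsets0] at h0
      rw [hsetsi i hi] at hii
      exact le_trans hii h0
    · have huniv : {ω | ∀ i, i ≠ 0 → X i ω ≤ X 0 ω} = Set.univ :=
        Set.eq_univ_of_forall fun ω i hi => absurd ⟨i, (hmem i).2 hi⟩ hsn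
      simp [huniv]
end
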